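/- arXiv:2501.10816 — 7 statements merged into one kernel-verified Lean document; each statement's English description precedes it below -/
import Mathlib

section
/- Let $b>0$ and $m\geq 0$ satisfy $b^2>4m$. Then there exists a constant $C>0$, depending only on $b$ and $m$, such that for every real number $\Lambda$ with $\Lambda>\tfrac12\left(\tfrac{b^2}{4}-m\right)$, every twice continuously differentiable function $y:[0,\infty)\to\mathbb{C}$ satisfying $y''(t)+b\,y'(t)+(\Lambda+m)\,y(t)=0$ for all $t\geq 0$, and every $t>0$, one has $|y(t)|^2\leq C\,e^{\left(-b+\sqrt{\frac12(b^2-4m)}\right)t}\left(|y(0)|^2+|y'(0)|^2\right)$. -/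
open Set Complex

lemma hasDerivAt_normSq' {f : ℝ → ℂ} {f' : ℂ} {t : ℝ} (hf : HasDerivAt f f' t) :
    HasDerivAt (fun t => Complex.normSq (f t))
      (2 * ((f t).re * f'.re + (f t).im * f'.im)) t := by
  have hre : HasDerivAt (fun t => (f t).re) f'.re t :=
    (Complex.reCLM.hasFDerivAt.comp_hasDerivAt t hf)
  have him : HasDerivAt (fun t => (f t).im) f'.im t :=
    (Complex.imCLM.hasFDerivAt.comp_hasDerivAt t hf)
  have h := (hre.mul hre).add (him.mul him)
  have : (fun t => Complex.normSq (f t)) = fun x => (f x).re * (f x).re + (f x).im * (f x).im := by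
    funext x; exact Complex.normSq_apply (f x)
  rw [this]
  refine h.congr_deriv ?_
  ring

set_option maxHeartbeats 1000000 in
/-- Large-frequency estimate: for `Λ > (b²/4 - m)/2` and any C² solution `y` of
`y'' + b y' + (Λ + m) y = 0` on `[0,∞)`, one has
`|y(t)|² ≤ C e^{(-b+√(½(b²-4m)))t} (|y(0)|² + |y'(0)|²)` with `C = C(b,m)`. -/
theorem stmt_3 (b m : ℝ) (hb : 0 < b) (hm : 0 ≤ m) (hbm : 4 * m < b ^ 2) :
    ∃ C : ℝ, 0 < C ∧ ∀ Λ : ℝ, (b ^ 2 / 4 - m) / 2 < Λ →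
      ∀ y : ℝ → ℂ, ContDiffOn ℝ 2 y (Set.Ici 0) →
      (∀ t ∈ Set.Ici (0 : ℝ),
        derivWithin (derivWithin y (Set.Ici 0)) (Set.Ici 0) t
          + (b : ℂ) * derivWithin y (Set.Ici 0) t
          + ((Λ : ℂ) + (m : ℂ)) * y t = 0) →
      ∀ t : ℝ, 0 < t →
        ‖y t‖ ^ 2 ≤
          C * Real.exp ((-b + Real.sqrt ((b ^ 2 - 4 * m) / 2)) * t) *
            (‖y 0‖ ^ 2
              + ‖derivWithin y (Set.Ici 0) 0‖ ^ 2) := by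
  set s : ℝ := Real.sqrt ((b ^ 2 - 4 * m) / 2) with hsdef
  have hs : 0 < s := Real.sqrt_pos.2 (by nlinarith)
  have hs2 : s ^ 2 = (b ^ 2 - 4 * m) / 2 := Real.sq_sqrt (by nlinarith)
  set σ : ℝ := (-b + s) / 2 with hσdef
  refine ⟨9 + 24 * (σ ^ 2 + 1) / s ^ 2, by positivity, ?_⟩
  intro Λ hΛ y hy hode t ht
  set c : ℝ := Λ + m / 2 - b ^ 2 / 8 with hcdef
  have hcpos : 0 < c := by simp only [hcdef]; linarith
  set Y := derivWithin y (Set.Ici 0) with hYdef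
  have hyD : DifferentiableOn ℝ y (Set.Ici 0) := hy.differentiableOn (by norm_num)
  have hYc : ContDiffOn ℝ 1 Y (Set.Ici 0) := hy.derivWithin (uniqueDiffOn_Ici 0) (by norm_num)
  have hYD : DifferentiableOn ℝ Y (Set.Ici 0) := hYc.differentiableOn (by norm_num)
  have hycont : ContinuousOn y (Set.Ici 0) := hy.continuousOn
  have hYcont : ContinuousOn Y (Set.Ici 0) := hYc.continuousOn
  set E : ℝ → ℝ := fun t => Real.exp (-σ * t) with hEdef
  set z : ℝ → ℂ := fun t => (E t : ℂ) * y t with hzdef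
  set dz : ℝ → ℂ := fun t => (E t : ℂ) * (Y t - (σ : ℂ) * y t) with hdzdef
  have hEc : ∀ x : ℝ, HasDerivAt (fun t => ((E t : ℝ) : ℂ)) ((-σ * E x : ℝ) : ℂ) x := by
    intro x
    have h1 : HasDerivAt E (-σ * E x) x := by
      have := ((hasDerivAt_id x).const_mul (-σ)).exp
      simpa [hEdef, mul_comm] using this
    exact h1.ofReal_comp
  have hyd : ∀ x : ℝ, 0 < x → HasDerivAt y (Y x) x := fun x hx =>
    ((hyD x (le_of_lt hx)).hasDerivWithinAt).hasDerivAt (Ici_mem_nhds hx)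
  have hYd : ∀ x : ℝ, 0 < x → HasDerivAt Y (derivWithin Y (Set.Ici 0) x) x := fun x hx =>
    ((hYD x (le_of_lt hx)).hasDerivWithinAt).hasDerivAt (Ici_mem_nhds hx)
  have hODE : ∀ x : ℝ, 0 ≤ x →
      derivWithin Y (Set.Ici 0) x = -((b : ℂ) * Y x + ((Λ : ℂ) + (m : ℂ)) * y x) := by
    intro x hx
    have := hode x hx
    linear_combination this
  have hz : ∀ x : ℝ, 0 < x → HasDerivAt z (dz x) x := by
    intro x hx
    have h := (hEc x).mul (hyd x hx)
    have : dz x = ((-σ * E x : ℝ) : ℂ) * y x + (E x : ℂ) * Y x := by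
      simp only [hdzdef]; push_cast; ring
    rw [this]; exact h
  have hdz : ∀ x : ℝ, 0 < x → HasDerivAt dz (-(s : ℂ) * dz x - (c : ℂ) * z x) x := by
    intro x hx
    have h := (hEc x).mul ((hYd x hx).sub ((hyd x hx).const_mul (σ : ℂ)))
    have heq : -(s : ℂ) * dz x - (c : ℂ) * z x
        = ((-σ * E x : ℝ) : ℂ) * (Y x - (σ : ℂ) * y x)
          + (E x : ℂ) * (derivWithin Y (Set.Ici 0) x - (σ : ℂ) * Y x) := by
      rw [hODE x (le_of_lt hx)]
      simp only [hdzdef, hzdef, hσdef, hcdef]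
      have hs2C : (s : ℂ) ^ 2 = ((b : ℂ) ^ 2 - 4 * (m : ℂ)) / 2 := by
        exact_mod_cast congrArg (fun r : ℝ => (r : ℂ)) hs2
      push_cast
      linear_combination ((E x : ℂ) * y x / 4) * hs2C
    rw [heq]; exact h
  have hEcont : Continuous fun t : ℝ => ((E t : ℝ) : ℂ) :=
    Complex.continuous_ofReal.comp (Real.continuous_exp.comp (continuous_const.mul continuous_id))
  have hzcont : ContinuousOn z (Set.Ici 0) := (hEcont.continuousOn).mul hycont
  have hdzcont : ContinuousOn dz (Set.Ici 0) :=
    (hEcont.continuousOn).mul (hYcont.sub (continuousOn_const.mul hycont))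
  have hz0 : z 0 = y 0 := by simp [hzdef, hEdef]
  have hdz0 : dz 0 = Y 0 - (σ : ℂ) * y 0 := by simp [hdzdef, hEdef]
  have hs2pos : (0:ℝ) < s ^ 2 := by positivity
  set a0 : ℝ := Complex.normSq (y 0) with ha0
  set a1 : ℝ := Complex.normSq (Y 0) with ha1
  have ha0n : 0 ≤ a0 := Complex.normSq_nonneg _
  have ha1n : 0 ≤ a1 := Complex.normSq_nonneg _
  have key : Complex.normSq (z t) ≤ (9 + 24 * (σ ^ 2 + 1) / s ^ 2) * (a0 + a1) := by
    rcases le_or_gt c (s ^ 2) with hcase | hcase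
    · -- small c : V = |s z + dz|^2 + |dz|^2
      set V : ℝ → ℝ := fun x =>
        Complex.normSq ((s : ℂ) * z x + dz x) + Complex.normSq (dz x) with hVdef
      have hVD : ∀ x : ℝ, 0 < x → HasDerivAt V
          (-2*c*s*Complex.normSq (z x)
            - 4*c*((dz x).re*(z x).re + (dz x).im*(z x).im)
            - 2*s*Complex.normSq (dz x)) x := by
        intro x hx
        have hu1 : HasDerivAt (fun x => (s : ℂ) * z x + dz x) (-(c : ℂ) * z x) x := by
          have h := ((hz x hx).const_mul (s : ℂ)).add (hdz x hx)
          refine h.congr_deriv ?_; ring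
        have h := (hasDerivAt_normSq' hu1).add (hasDerivAt_normSq' (hdz x hx))
        refine h.congr_deriv ?_
        simp only [Complex.normSq_apply, Complex.add_re, Complex.add_im, Complex.mul_re,
          Complex.mul_im, Complex.neg_re, Complex.neg_im, Complex.sub_re, Complex.sub_im,
          Complex.ofReal_re, Complex.ofReal_im]
        ring
      have hanti : AntitoneOn V (Set.Ici 0) := by
        apply antitoneOn_of_deriv_nonpos (convex_Ici 0)
        · exact (Complex.continuous_normSq.comp_continuousOn
            ((continuous_const.continuousOn.mul hzcont).add hdzcont)).add
            (Complex.continuous_normSq.comp_continuousOn hdzcont)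
        · rw [interior_Ici]
          intro x hx
          exact ((hVD x hx).differentiableAt).differentiableWithinAt
        · rw [interior_Ici]
          intro x hx
          rw [(hVD x hx).deriv]
          have hN1 : 0 ≤ (s*(z x).re + (dz x).re)^2 + (s*(z x).im + (dz x).im)^2 := by positivity
          have hd : 0 ≤ Complex.normSq (dz x) := Complex.normSq_nonneg _
          have h1 : 0 ≤ c * ((s*(z x).re + (dz x).re)^2 + (s*(z x).im + (dz x).im)^2) :=
            mul_nonneg hcpos.le hN1
          have h2 : 0 ≤ (s^2 - c) * Complex.normSq (dz x) :=
            mul_nonneg (by linarith) hd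
          simp only [Complex.normSq_apply] at h1 h2 ⊢
          nlinarith [hs, mul_pos hs hcpos]
      have hVt : V t ≤ V 0 := hanti (Set.self_mem_Ici) (Set.mem_Ici.2 ht.le) ht.le
      have e1 : s ^ 2 * Complex.normSq (z t) ≤ 2 * V t := by
        simp only [hVdef, Complex.normSq_apply, Complex.add_re, Complex.add_im,
          Complex.mul_re, Complex.mul_im, Complex.ofReal_re, Complex.ofReal_im]
        nlinarith [sq_nonneg (s*(z t).re + 2*(dz t).re), sq_nonneg (s*(z t).im + 2*(dz t).im)]
      have b2 : Complex.normSq (dz 0) ≤ 2*a1 + 2*σ^2*a0 := by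
        simp only [hdz0, ha0, ha1, Complex.normSq_apply, Complex.sub_re, Complex.sub_im,
          Complex.mul_re, Complex.mul_im, Complex.ofReal_re, Complex.ofReal_im]
        nlinarith [sq_nonneg (σ*(y 0).re + (Y 0).re), sq_nonneg (σ*(y 0).im + (Y 0).im)]
      have b1 : Complex.normSq ((s : ℂ) * z 0 + dz 0)
          ≤ 2*s^2*a0 + 2*Complex.normSq (dz 0) := by
        simp only [hz0, ha0, Complex.normSq_apply, Complex.add_re, Complex.add_im,
          Complex.mul_re, Complex.mul_im, Complex.ofReal_re, Complex.ofReal_im]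
        nlinarith [sq_nonneg (s*(y 0).re - (dz 0).re), sq_nonneg (s*(y 0).im - (dz 0).im)]
      have e3 : V 0 ≤ 2*s^2*a0 + 6*a1 + 6*σ^2*a0 := by
        have : V 0 = Complex.normSq ((s : ℂ) * z 0 + dz 0) + Complex.normSq (dz 0) := rfl
        rw [this]; linarith
      have hfin : s^2 * Complex.normSq (z t) ≤ s^2 * ((9 + 24*(σ^2+1)/s^2) * (a0 + a1)) := by
        have hrw : s^2 * ((9 + 24*(σ^2+1)/s^2) * (a0 + a1))
            = 9*s^2*(a0+a1) + 24*(σ^2+1)*(a0+a1) := by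
          field_simp
        rw [hrw]
        linarith [mul_nonneg hs2pos.le ha0n, mul_nonneg hs2pos.le ha1n,
          mul_nonneg (sq_nonneg σ) ha0n, mul_nonneg (sq_nonneg σ) ha1n]
      exact le_of_mul_le_mul_left (by linarith [hfin]) hs2pos
    · -- large c : V = |dz|^2 + c |z|^2
      set V : ℝ → ℝ := fun x =>
        Complex.normSq (dz x) + c * Complex.normSq (z x) with hVdef
      have hVD : ∀ x : ℝ, 0 < x → HasDerivAt V (-2*s*Complex.normSq (dz x)) x := by
        intro x hx
        have h := (hasDerivAt_normSq' (hdz x hx)).add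
          ((hasDerivAt_normSq' (hz x hx)).const_mul c)
        refine h.congr_deriv ?_
        simp only [Complex.normSq_apply, Complex.add_re, Complex.add_im, Complex.mul_re,
          Complex.mul_im, Complex.neg_re, Complex.neg_im, Complex.sub_re, Complex.sub_im,
          Complex.ofReal_re, Complex.ofReal_im]
        ring
      have hanti : AntitoneOn V (Set.Ici 0) := by
        apply antitoneOn_of_deriv_nonpos (convex_Ici 0)
        · exact (Complex.continuous_normSq.comp_continuousOn hdzcont).add
            (continuousOn_const.mul (Complex.continuous_normSq.comp_continuousOn hzcont))
        · rw [interior_Ici]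
          intro x hx
          exact ((hVD x hx).differentiableAt).differentiableWithinAt
        · rw [interior_Ici]
          intro x hx
          rw [(hVD x hx).deriv]
          have hd : 0 ≤ Complex.normSq (dz x) := Complex.normSq_nonneg _
          nlinarith [hs]
      have hVt : V t ≤ V 0 := hanti (Set.self_mem_Ici) (Set.mem_Ici.2 ht.le) ht.le
      have e0 : Complex.normSq (dz 0) ≤ 2*a1 + 2*σ^2*a0 := by
        simp only [hdz0, ha0, ha1, Complex.normSq_apply, Complex.sub_re, Complex.sub_im,
          Complex.mul_re, Complex.mul_im, Complex.ofReal_re, Complex.ofReal_im]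
        nlinarith [sq_nonneg (σ*(y 0).re + (Y 0).re), sq_nonneg (σ*(y 0).im + (Y 0).im)]
      have e : c * Complex.normSq (z t) ≤ c*a0 + 2*a1 + 2*σ^2*a0 := by
        have hdt : 0 ≤ Complex.normSq (dz t) := Complex.normSq_nonneg _
        have : V t = Complex.normSq (dz t) + c * Complex.normSq (z t) := rfl
        have hV0 : V 0 = Complex.normSq (dz 0) + c * a0 := by simp [hVdef, hz0, ha0]
        rw [this] at hVt; rw [hV0] at hVt
        linarith
      have hfin : (s^2 * c) * Complex.normSq (z t)
          ≤ (s^2 * c) * ((9 + 24*(σ^2+1)/s^2) * (a0 + a1)) := by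
        have hrw : (s^2*c) * ((9 + 24*(σ^2+1)/s^2) * (a0 + a1))
            = c * (9*s^2*(a0+a1) + 24*(σ^2+1)*(a0+a1)) := by
          field_simp
        rw [hrw]
        have hnzn : 0 ≤ Complex.normSq (z t) := Complex.normSq_nonneg _
        linarith [mul_le_mul_of_nonneg_left e hs2pos.le,
          mul_nonneg (sub_nonneg.2 hcase.le) ha1n,
          mul_nonneg (sub_nonneg.2 hcase.le) (mul_nonneg (sq_nonneg σ) ha0n),
          mul_nonneg hcpos.le (mul_nonneg hs2pos.le ha0n),
          mul_nonneg hcpos.le (mul_nonneg hs2pos.le ha1n),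
          mul_nonneg hcpos.le (mul_nonneg (sq_nonneg σ) ha0n),
          mul_nonneg hcpos.le (mul_nonneg (sq_nonneg σ) ha1n),
          mul_nonneg hcpos.le ha0n, mul_nonneg hcpos.le ha1n]
      exact le_of_mul_le_mul_left (by linarith [hfin]) (mul_pos hs2pos hcpos)
  -- convert back to y
  have hnz : Complex.normSq (z t) = Real.exp (-σ*t)^2 * Complex.normSq (y t) := by
    have hzt : z t = ((Real.exp (-σ*t) : ℝ) : ℂ) * y t := rfl
    rw [hzt, Complex.normSq_mul, Complex.normSq_ofReal, sq]
  have hexp1 : Real.exp ((-b+s)*t) * Real.exp (-σ*t)^2 = 1 := by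
    rw [sq, ← Real.exp_add, ← Real.exp_add, show (-b+s)*t + (-σ*t + -σ*t) = 0 by
      rw [hσdef]; ring, Real.exp_zero]
  have habs : ‖y t‖ ^ 2 = Real.exp ((-b+s)*t) * Complex.normSq (z t) := by
    rw [Complex.sq_norm, hnz, ← mul_assoc, hexp1, one_mul]
  rw [habs]
  calc Real.exp ((-b+s)*t) * Complex.normSq (z t)
      ≤ Real.exp ((-b+s)*t) * ((9 + 24*(σ^2+1)/s^2) * (a0 + a1)) :=
        mul_le_mul_of_nonneg_left key (Real.exp_nonneg _)
    _ = (9 + 24*(σ^2+1)/s^2) * Real.exp ((-b+s)*t)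
        * (‖y 0‖ ^ 2 + ‖Y 0‖ ^ 2) := by
        rw [Complex.sq_norm, Complex.sq_norm]; ring
end

section
/- Let $b>0$ and $m\geq 0$ satisfy $b^2>4m$. Then there exists a constant $C>0$, depending only on $b$ and $m$, such that for every real number $\Lambda$ with $0<\Lambda<\tfrac12\left(\tfrac{b^2}{4}-m\right)$, every twice continuously differentiable function $y:[0,\infty)\to\mathbb{C}$ satisfying $y''(t)+b\,y'(t)+(\Lambda+m)\,y(t)=0$ for all $t\geq 0$, and every $t>0$, one has $|y'(t)|^2\leq C\,e^{\left(-b+\sqrt{b^2-4m-4\Lambda}\right)t}(\Lambda+m)^2\left(|y(0)|^2+|y'(0)|^2\right)+C\,e^{\left(-b-\sqrt{b^2-4m-4\Lambda}\right)t}|y'(0)|^2$. -/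
lemma sq_add_le_two (x y : ℝ) : (x + y) ^ 2 ≤ 2 * x ^ 2 + 2 * y ^ 2 := by
  nlinarith [sq_nonneg (x - y)]

lemma sq_add_mul_le (a c x : ℝ) : (a + c * x) ^ 2 ≤ 2 * a ^ 2 + 2 * c ^ 2 * x ^ 2 := by
  nlinarith [sq_nonneg (a - c * x)]

lemma exp_ode (c : ℂ) (f : ℝ → ℂ)
    (hf : ∀ t ∈ Set.Ici (0:ℝ), HasDerivWithinAt f (c * f t) (Set.Ici 0) t) :
    ∀ t ∈ Set.Ici (0:ℝ), f t = Complex.exp (c * t) * f 0 := by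
  have hlin : ∀ t : ℝ, HasDerivAt (fun s : ℝ => -c * (s:ℂ)) (-c) t := by
    intro t
    simpa using (Complex.ofRealCLM.hasDerivAt (x := t)).const_mul (-c)
  set g : ℝ → ℂ := fun t => Complex.exp (-c * t) * f t with hg
  have hgd : ∀ t ∈ Set.Ici (0:ℝ), HasDerivWithinAt g 0 (Set.Ici 0) t := by
    intro t ht
    have h1 : HasDerivWithinAt (fun s : ℝ => Complex.exp (-c * s))
        (Complex.exp (-c * t) * (-c)) (Set.Ici 0) t :=
      ((hlin t).cexp).hasDerivWithinAt
    have h2 := h1.mul (hf t ht)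
    exact h2.congr_deriv (by ring)
  have hcont : ContinuousOn g (Set.Ici 0) := fun x hx => (hgd x hx).continuousWithinAt
  have key : ∀ t ∈ Set.Ici (0:ℝ), g t = g 0 := by
    intro t ht
    have := constant_of_has_deriv_right_zero (f := g) (a := 0) (b := t)
      (hcont.mono Set.Icc_subset_Ici_self)
      (fun x hx => (hgd x (Set.mem_Ici.2 hx.1)).mono (Set.Ici_subset_Ici.2 hx.1))
    exact this t ⟨le_refl 0 |>.trans ht, le_refl t⟩ |>.trans (by simp)
  intro t ht
  have h := key t ht
  have hne : Complex.exp (-c * t) ≠ 0 := Complex.exp_ne_zero _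
  have : Complex.exp (-c * t) * f t = Complex.exp (-c * 0) * f 0 := h
  rw [show (-c) * (0:ℂ) = 0 by ring, Complex.exp_zero, one_mul] at this
  calc f t = Complex.exp (c * t) * (Complex.exp (-c * t) * f t) := by
        rw [← mul_assoc, ← Complex.exp_add, show c * ↑t + -c * ↑t = 0 by ring,
          Complex.exp_zero, one_mul]
    _ = Complex.exp (c * t) * f 0 := by rw [this]

set_option maxHeartbeats 1000000 in
/-- Small-frequency estimate for the time derivative: for `0 < Λ < (b²/4 - m)/2` and any
C² solution `y` of `y'' + b y' + (Λ + m) y = 0` on `[0,∞)`, one has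
`|y'(t)|² ≤ C e^{(-b+√(b²-4m-4Λ))t} (Λ+m)² (|y(0)|² + |y'(0)|²)
          + C e^{(-b-√(b²-4m-4Λ))t} |y'(0)|²` with `C = C(b,m)`. -/
theorem stmt_4 (b m : ℝ) (hb : 0 < b) (hm : 0 ≤ m) (hbm : 4 * m < b ^ 2) :
    ∃ C : ℝ, 0 < C ∧ ∀ Λ : ℝ, 0 < Λ → Λ < (b ^ 2 / 4 - m) / 2 →
      ∀ y : ℝ → ℂ, ContDiffOn ℝ 2 y (Set.Ici 0) →
      (∀ t ∈ Set.Ici (0 : ℝ),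
        derivWithin (derivWithin y (Set.Ici 0)) (Set.Ici 0) t
          + (b : ℂ) * derivWithin y (Set.Ici 0) t
          + ((Λ : ℂ) + (m : ℂ)) * y t = 0) →
      ∀ t : ℝ, 0 < t →
        ‖derivWithin y (Set.Ici 0) t‖ ^ 2 ≤
          C * Real.exp ((-b + Real.sqrt (b ^ 2 - 4 * m - 4 * Λ)) * t) * (Λ + m) ^ 2 *
            (‖y 0‖ ^ 2
              + ‖derivWithin y (Set.Ici 0) 0‖ ^ 2)
          + C * Real.exp ((-b - Real.sqrt (b ^ 2 - 4 * m - 4 * Λ)) * t) *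
              ‖derivWithin y (Set.Ici 0) 0‖ ^ 2 := by
  have hb2 : 0 < b ^ 2 - 4 * m := by nlinarith
  have hD : 0 < b ^ 2 * (b ^ 2 - 4 * m) := by positivity
  refine ⟨8 * (2 * b ^ 2 + b ^ 4 + 4) / (b ^ 2 * (b ^ 2 - 4 * m)), by positivity, ?_⟩
  intro Λ hΛ hΛ' y hy heq t ht
  have h4 : 0 < b ^ 2 - 4 * m - 4 * Λ := by nlinarith
  set δ := Real.sqrt (b ^ 2 - 4 * m - 4 * Λ) with hδdef
  have hδpos : 0 < δ := Real.sqrt_pos.2 h4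
  have hδsq : δ ^ 2 = b ^ 2 - 4 * m - 4 * Λ := Real.sq_sqrt h4.le
  have hδltb : δ < b := by nlinarith [hδsq, hδpos]
  have hδlb : (b ^ 2 - 4 * m) / 2 ≤ δ ^ 2 := by rw [hδsq]; nlinarith
  set r1 : ℝ := (-b + δ) / 2 with hr1def
  set r2 : ℝ := (-b - δ) / 2 with hr2def
  have hsum : r1 + r2 = -b := by rw [hr1def, hr2def]; ring
  have hprod : r1 * r2 = Λ + m := by
    have : r1 * r2 = (b ^ 2 - δ ^ 2) / 4 := by rw [hr1def, hr2def]; ring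
    rw [this, hδsq]; ring
  have hr1neg : r1 < 0 := by rw [hr1def]; linarith
  have hr2neg : r2 < 0 := by rw [hr2def]; linarith
  have hr1sqb : r1 ^ 2 * b ^ 2 ≤ 4 * (Λ + m) ^ 2 := by
    have h1 : (b + δ) ^ 2 = 4 * r2 ^ 2 := by rw [hr2def]; ring
    have h3 : b ^ 2 ≤ (b + δ) ^ 2 := by nlinarith
    calc r1 ^ 2 * b ^ 2 ≤ r1 ^ 2 * (b + δ) ^ 2 :=
          mul_le_mul_of_nonneg_left h3 (sq_nonneg r1)
      _ = 4 * (Λ + m) ^ 2 := by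
          rw [h1, show r1 ^ 2 * (4 * r2 ^ 2) = 4 * (r1 * r2) ^ 2 by ring, hprod]
  have hr2sq : r2 ^ 2 ≤ b ^ 2 := by rw [hr2def]; nlinarith
  -- derivatives
  have hud : UniqueDiffOn ℝ (Set.Ici (0 : ℝ)) := uniqueDiffOn_Ici 0
  set Y1 : ℝ → ℂ := derivWithin y (Set.Ici 0) with hY1
  set Y2 : ℝ → ℂ := derivWithin Y1 (Set.Ici 0) with hY2
  have hdy : DifferentiableOn ℝ y (Set.Ici 0) := hy.differentiableOn (by norm_num)
  have hY1cd : ContDiffOn ℝ 1 Y1 (Set.Ici 0) := hy.derivWithin hud (by norm_num)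
  have hdY1 : DifferentiableOn ℝ Y1 (Set.Ici 0) := hY1cd.differentiableOn one_ne_zero
  have hy' : ∀ u ∈ Set.Ici (0:ℝ), HasDerivWithinAt y (Y1 u) (Set.Ici 0) u :=
    fun u hu => (hdy u hu).hasDerivWithinAt
  have hy'' : ∀ u ∈ Set.Ici (0:ℝ), HasDerivWithinAt Y1 (Y2 u) (Set.Ici 0) u :=
    fun u hu => (hdY1 u hu).hasDerivWithinAt
  have hODE : ∀ u ∈ Set.Ici (0:ℝ), Y2 u = -(b:ℂ) * Y1 u - ((Λ:ℂ) + (m:ℂ)) * y u := by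
    intro u hu
    have h := heq u hu
    linear_combination h
  have castsum : (r1 : ℂ) + (r2 : ℂ) = -(b : ℂ) := by exact_mod_cast hsum
  have castprod : (r1 : ℂ) * (r2 : ℂ) = (Λ : ℂ) + (m : ℂ) := by exact_mod_cast hprod
  -- the two first-order factors
  have hvd : ∀ u ∈ Set.Ici (0:ℝ), HasDerivWithinAt (fun s => Y1 s - (r1:ℂ) * y s)
      ((r2:ℂ) * (Y1 u - (r1:ℂ) * y u)) (Set.Ici 0) u := by
    intro u hu
    have h := (hy'' u hu).sub ((hy' u hu).const_mul (r1:ℂ))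
    refine h.congr_deriv ?_
    symm
    rw [hODE u hu]
    linear_combination (Y1 u) * castsum + (- y u) * castprod
  have hwd : ∀ u ∈ Set.Ici (0:ℝ), HasDerivWithinAt (fun s => Y1 s - (r2:ℂ) * y s)
      ((r1:ℂ) * (Y1 u - (r2:ℂ) * y u)) (Set.Ici 0) u := by
    intro u hu
    have h := (hy'' u hu).sub ((hy' u hu).const_mul (r2:ℂ))
    refine h.congr_deriv ?_
    symm
    rw [hODE u hu]
    linear_combination (Y1 u) * castsum + (- y u) * castprod
  have htmem : t ∈ Set.Ici (0:ℝ) := le_of_lt ht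
  have hvt : Y1 t - (r1:ℂ) * y t = Complex.exp ((r2:ℂ) * t) * (Y1 0 - (r1:ℂ) * y 0) := by
    exact exp_ode (r2:ℂ) (fun s => Y1 s - (r1:ℂ) * y s) hvd t htmem
  have hwt : Y1 t - (r2:ℂ) * y t = Complex.exp ((r1:ℂ) * t) * (Y1 0 - (r2:ℂ) * y 0) := by
    exact exp_ode (r1:ℂ) (fun s => Y1 s - (r2:ℂ) * y s) hwd t htmem
  -- representation of Y1 t
  have hr12 : r1 - r2 = δ := by rw [hr1def, hr2def]; ring
  have hrep : ((δ:ℝ) : ℂ) * Y1 t =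
      (r1:ℂ) * (Y1 t - (r2:ℂ) * y t) - (r2:ℂ) * (Y1 t - (r1:ℂ) * y t) := by
    have hδc : ((δ:ℝ) : ℂ) = (r1:ℂ) - (r2:ℂ) := by exact_mod_cast hr12.symm
    rw [hδc]; ring
  -- abbreviations
  set a0 : ℝ := ‖y 0‖ with ha0
  set a1 : ℝ := ‖Y1 0‖ with ha1
  set X : ℝ := ‖Y1 t‖ with hX
  set e1 : ℝ := Real.exp (r1 * t) with he1
  set e2 : ℝ := Real.exp (r2 * t) with he2
  have ha0nn : 0 ≤ a0 := norm_nonneg _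
  have ha1nn : 0 ≤ a1 := norm_nonneg _
  have hXnn : 0 ≤ X := norm_nonneg _
  have habsw : ‖Y1 0 - (r2:ℂ) * y 0‖ ≤ a1 + (-r2) * a0 := by
    calc ‖Y1 0 - (r2:ℂ) * y 0‖
        ≤ ‖Y1 0‖ + ‖(r2:ℂ) * y 0‖ := by
          exact norm_sub_le (Y1 0) ((r2:ℂ) * y 0)
      _ = a1 + (-r2) * a0 := by
          rw [norm_mul, Complex.norm_real, Real.norm_eq_abs, abs_of_neg hr2neg]
  have habsv : ‖Y1 0 - (r1:ℂ) * y 0‖ ≤ a1 + (-r1) * a0 := by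
    calc ‖Y1 0 - (r1:ℂ) * y 0‖
        ≤ ‖Y1 0‖ + ‖(r1:ℂ) * y 0‖ := by
          exact norm_sub_le (Y1 0) ((r1:ℂ) * y 0)
      _ = a1 + (-r1) * a0 := by
          rw [norm_mul, Complex.norm_real, Real.norm_eq_abs, abs_of_neg hr1neg]
  have habsexp1 : ‖Complex.exp ((r1:ℂ) * t)‖ = e1 := by
    rw [show ((r1:ℝ):ℂ) * ((t:ℝ):ℂ) = (((r1 * t : ℝ)):ℂ) by push_cast; ring,
      Complex.norm_exp, Complex.ofReal_re]
  have habsexp2 : ‖Complex.exp ((r2:ℂ) * t)‖ = e2 := by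
    rw [show ((r2:ℝ):ℂ) * ((t:ℝ):ℂ) = (((r2 * t : ℝ)):ℂ) by push_cast; ring,
      Complex.norm_exp, Complex.ofReal_re]
  have he1pos : 0 < e1 := Real.exp_pos _
  have he2pos : 0 < e2 := Real.exp_pos _
  have hmain : δ * X ≤ (-r1) * e1 * (a1 + (-r2) * a0) + (-r2) * e2 * (a1 + (-r1) * a0) := by
    have h0 : δ * X = ‖((δ:ℝ):ℂ) * Y1 t‖ := by
      rw [norm_mul, Complex.norm_real, Real.norm_eq_abs, abs_of_pos hδpos]
    rw [h0, hrep]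
    calc ‖(r1:ℂ) * (Y1 t - (r2:ℂ) * y t) - (r2:ℂ) * (Y1 t - (r1:ℂ) * y t)‖
        ≤ ‖(r1:ℂ) * (Y1 t - (r2:ℂ) * y t)‖
          + ‖(r2:ℂ) * (Y1 t - (r1:ℂ) * y t)‖ := by
          exact
            norm_sub_le ((r1:ℂ) * (Y1 t - (r2:ℂ) * y t)) ((r2:ℂ) * (Y1 t - (r1:ℂ) * y t))
      _ = (-r1) * (e1 * ‖Y1 0 - (r2:ℂ) * y 0‖)
          + (-r2) * (e2 * ‖Y1 0 - (r1:ℂ) * y 0‖) := by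
          rw [hwt, hvt, norm_mul, norm_mul, norm_mul, norm_mul, Complex.norm_real,
            Complex.norm_real, Real.norm_eq_abs, Real.norm_eq_abs, abs_of_neg hr1neg, abs_of_neg hr2neg, habsexp1, habsexp2]
      _ ≤ (-r1) * e1 * (a1 + (-r2) * a0) + (-r2) * e2 * (a1 + (-r1) * a0) := by
          have h1 := mul_le_mul_of_nonneg_left habsw (le_of_lt (mul_pos (neg_pos.2 hr1neg) he1pos))
          have h2 := mul_le_mul_of_nonneg_left habsv (le_of_lt (mul_pos (neg_pos.2 hr2neg) he2pos))
          calc (-r1) * (e1 * ‖Y1 0 - (r2:ℂ) * y 0‖)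
              + (-r2) * (e2 * ‖Y1 0 - (r1:ℂ) * y 0‖)
              = (-r1) * e1 * ‖Y1 0 - (r2:ℂ) * y 0‖
              + (-r2) * e2 * ‖Y1 0 - (r1:ℂ) * y 0‖ := by ring
            _ ≤ _ := add_le_add h1 h2
  -- exponentials squared
  set E1 : ℝ := Real.exp ((-b + δ) * t) with hE1def
  set E2 : ℝ := Real.exp ((-b - δ) * t) with hE2def
  have hE1sq : e1 ^ 2 = E1 := by
    rw [he1, hE1def, sq, ← Real.exp_add]; congr 1; rw [hr1def]; ring
  have hE2sq : e2 ^ 2 = E2 := by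
    rw [he2, hE2def, sq, ← Real.exp_add]; congr 1; rw [hr2def]; ring
  have hE1pos : 0 < E1 := Real.exp_pos _
  have hE2pos : 0 < E2 := Real.exp_pos _
  have hE2leE1 : E2 ≤ E1 := by
    rw [hE1def, hE2def]
    exact Real.exp_le_exp.2 (mul_le_mul_of_nonneg_right (by linarith : -b - δ ≤ -b + δ) ht.le)
  -- squaring
  have hsq1 : (δ * X) ^ 2 ≤
      ((-r1) * e1 * (a1 + (-r2) * a0) + (-r2) * e2 * (a1 + (-r1) * a0)) ^ 2 :=
    pow_le_pow_left₀ (by positivity) hmain 2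
  have hW2 : (a1 + (-r2) * a0) ^ 2 ≤ 2 * a1 ^ 2 + 2 * r2 ^ 2 * a0 ^ 2 := by
    simpa [neg_sq] using sq_add_mul_le a1 (-r2) a0
  have hV2 : (a1 + (-r1) * a0) ^ 2 ≤ 2 * a1 ^ 2 + 2 * r1 ^ 2 * a0 ^ 2 := by
    simpa [neg_sq] using sq_add_mul_le a1 (-r1) a0
  have hp : 2 * ((-r1) * e1 * (a1 + (-r2) * a0)) ^ 2 ≤
      4 * r1 ^ 2 * E1 * a1 ^ 2 + 4 * (Λ + m) ^ 2 * E1 * a0 ^ 2 := by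
    calc 2 * ((-r1) * e1 * (a1 + (-r2) * a0)) ^ 2
        = 2 * (r1 ^ 2 * E1) * (a1 + (-r2) * a0) ^ 2 := by rw [← hE1sq]; ring
      _ ≤ 2 * (r1 ^ 2 * E1) * (2 * a1 ^ 2 + 2 * r2 ^ 2 * a0 ^ 2) :=
          mul_le_mul_of_nonneg_left hW2 (by positivity)
      _ = 4 * r1 ^ 2 * E1 * a1 ^ 2 + 4 * (Λ + m) ^ 2 * E1 * a0 ^ 2 := by
          rw [show (4:ℝ) * (Λ + m) ^ 2 * E1 * a0 ^ 2 = 4 * (r1 * r2) ^ 2 * E1 * a0 ^ 2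
            from by rw [hprod]]
          ring
  have hq : 2 * ((-r2) * e2 * (a1 + (-r1) * a0)) ^ 2 ≤
      4 * r2 ^ 2 * E2 * a1 ^ 2 + 4 * (Λ + m) ^ 2 * E2 * a0 ^ 2 := by
    calc 2 * ((-r2) * e2 * (a1 + (-r1) * a0)) ^ 2
        = 2 * (r2 ^ 2 * E2) * (a1 + (-r1) * a0) ^ 2 := by rw [← hE2sq]; ring
      _ ≤ 2 * (r2 ^ 2 * E2) * (2 * a1 ^ 2 + 2 * r1 ^ 2 * a0 ^ 2) :=
          mul_le_mul_of_nonneg_left hV2 (by positivity)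
      _ = 4 * r2 ^ 2 * E2 * a1 ^ 2 + 4 * (Λ + m) ^ 2 * E2 * a0 ^ 2 := by
          rw [show (4:ℝ) * (Λ + m) ^ 2 * E2 * a0 ^ 2 = 4 * (r1 * r2) ^ 2 * E2 * a0 ^ 2
            from by rw [hprod]]
          ring
  have hS : X ^ 2 * δ ^ 2 ≤ 4 * r1 ^ 2 * E1 * a1 ^ 2 + 4 * (Λ + m) ^ 2 * E1 * a0 ^ 2
      + 4 * r2 ^ 2 * E2 * a1 ^ 2 + 4 * (Λ + m) ^ 2 * E2 * a0 ^ 2 := by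
    have h2ab : ((-r1) * e1 * (a1 + (-r2) * a0) + (-r2) * e2 * (a1 + (-r1) * a0)) ^ 2 ≤
        2 * ((-r1) * e1 * (a1 + (-r2) * a0)) ^ 2 + 2 * ((-r2) * e2 * (a1 + (-r1) * a0)) ^ 2 :=
      sq_add_le_two _ _
    have hXd : (δ * X) ^ 2 = X ^ 2 * δ ^ 2 := by ring
    linarith [hsq1, h2ab, hp, hq]
  -- multiply by b^2 and estimate coefficients
  have hk1 : r1 ^ 2 * b ^ 2 * (E1 * a1 ^ 2) ≤ 4 * (Λ + m) ^ 2 * (E1 * a1 ^ 2) :=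
    mul_le_mul_of_nonneg_right hr1sqb (by positivity)
  have hk2 : r2 ^ 2 * (b ^ 2 * (E2 * a1 ^ 2)) ≤ b ^ 2 * (b ^ 2 * (E2 * a1 ^ 2)) :=
    mul_le_mul_of_nonneg_right hr2sq (by positivity)
  have hk3 : b ^ 2 * (Λ + m) ^ 2 * a0 ^ 2 * E2 ≤ b ^ 2 * (Λ + m) ^ 2 * a0 ^ 2 * E1 :=
    mul_le_mul_of_nonneg_left hE2leE1 (by positivity)
  have key : X ^ 2 * (δ ^ 2 * b ^ 2) ≤ 16 * (Λ + m) ^ 2 * E1 * a1 ^ 2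
      + 8 * b ^ 2 * (Λ + m) ^ 2 * E1 * a0 ^ 2 + 4 * b ^ 4 * E2 * a1 ^ 2 := by
    have hb2S := mul_le_mul_of_nonneg_left hS (le_of_lt (by positivity : (0:ℝ) < b ^ 2))
    linarith [hb2S, hk1, hk2, hk3]
  -- conclude
  have hnum : X ^ 2 * (b ^ 2 * (b ^ 2 - 4 * m)) ≤
      8 * (2 * b ^ 2 + b ^ 4 + 4) * E1 * ((Λ + m) ^ 2 * (a0 ^ 2 + a1 ^ 2))
      + 8 * (2 * b ^ 2 + b ^ 4 + 4) * E2 * a1 ^ 2 := by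
    have h1 : X ^ 2 * b ^ 2 * ((b ^ 2 - 4 * m) / 2) ≤ X ^ 2 * b ^ 2 * δ ^ 2 :=
      mul_le_mul_of_nonneg_left hδlb (by positivity)
    have n1 : (0:ℝ) ≤ b ^ 2 * ((Λ + m) ^ 2 * E1 * a1 ^ 2) := by positivity
    have n2 : (0:ℝ) ≤ b ^ 4 * ((Λ + m) ^ 2 * E1 * a1 ^ 2) := by positivity
    have n3 : (0:ℝ) ≤ b ^ 4 * ((Λ + m) ^ 2 * E1 * a0 ^ 2) := by positivity
    have n4 : (0:ℝ) ≤ (Λ + m) ^ 2 * E1 * a0 ^ 2 := by positivity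
    have n5 : (0:ℝ) ≤ b ^ 2 * (E2 * a1 ^ 2) := by positivity
    have n6 : (0:ℝ) ≤ E2 * a1 ^ 2 := by positivity
    linarith [h1, key, n1, n2, n3, n4, n5, n6]
  have hrhs : 8 * (2 * b ^ 2 + b ^ 4 + 4) / (b ^ 2 * (b ^ 2 - 4 * m)) * E1 * (Λ + m) ^ 2 *
        (a0 ^ 2 + a1 ^ 2)
      + 8 * (2 * b ^ 2 + b ^ 4 + 4) / (b ^ 2 * (b ^ 2 - 4 * m)) * E2 * a1 ^ 2
      = (8 * (2 * b ^ 2 + b ^ 4 + 4) * E1 * ((Λ + m) ^ 2 * (a0 ^ 2 + a1 ^ 2))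
        + 8 * (2 * b ^ 2 + b ^ 4 + 4) * E2 * a1 ^ 2) / (b ^ 2 * (b ^ 2 - 4 * m)) := by
    field_simp
  rw [hrhs, le_div_iff₀ hD]
  exact hnum
end

section
/- Let $b>0$ and $m\geq 0$ satisfy $b^2>4m$. Then there exists a constant $C>0$, depending only on $b$ and $m$, such that for every real number $\Lambda$ with $\Lambda>\tfrac12\left(\tfrac{b^2}{4}-m\right)$, every twice continuously differentiable function $y:[0,\infty)\to\mathbb{C}$ satisfying $y''(t)+b\,y'(t)+(\Lambda+m)\,y(t)=0$ for all $t\geq 0$, and every $t>0$, one has $|y'(t)|^2\leq C\,e^{\left(-b+\sqrt{\frac12(b^2-4m)}\right)t}\left((\Lambda+m)|y(0)|^2+|y'(0)|^2\right)$. -/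
open scoped RealInnerProductSpace

/-- Gronwall-type lemma: if `F' ≤ -c F` on `[0,∞)` then `F t ≤ F 0 * exp (-c t)`. -/
private lemma gronwall_aux (F D : ℝ → ℝ) (c : ℝ)
    (hF : ∀ x ∈ Set.Ici (0:ℝ), HasDerivWithinAt F (D x) (Set.Ici 0) x)
    (hle : ∀ x ∈ Set.Ici (0:ℝ), D x + c * F x ≤ 0) :
    ∀ t ∈ Set.Ici (0:ℝ), F t ≤ F 0 * Real.exp (-(c * t)) := by
  have hG : ∀ x ∈ Set.Ioi (0:ℝ),
      HasDerivAt (fun x => F x * Real.exp (c * x))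
        (D x * Real.exp (c * x) + F x * (Real.exp (c * x) * c)) x := by
    intro x hx
    have h1 : HasDerivAt F (D x) x :=
      (hF x (Set.mem_Ici.2 (le_of_lt hx))).hasDerivAt (Ici_mem_nhds hx)
    have h2 : HasDerivAt (fun x : ℝ => Real.exp (c * x)) (Real.exp (c * x) * c) x := by
      simpa using ((hasDerivAt_id x).const_mul c).exp
    exact h1.mul h2
  have key : AntitoneOn (fun x => F x * Real.exp (c * x)) (Set.Ici 0) := by
    apply antitoneOn_of_deriv_nonpos (convex_Ici 0)
    · exact ContinuousOn.mul (fun x hx => (hF x hx).continuousWithinAt)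
        (Real.continuous_exp.comp (continuous_const.mul continuous_id)).continuousOn
    · intro x hx
      rw [interior_Ici] at hx
      exact (hG x hx).differentiableAt.differentiableWithinAt
    · intro x hx
      rw [interior_Ici] at hx
      rw [(hG x hx).deriv]
      have h3 := hle x (Set.mem_Ici.2 (le_of_lt (Set.mem_Ioi.1 hx)))
      have h4 := Real.exp_pos (c * x)
      nlinarith
  intro t ht
  have h2 : F t * Real.exp (c * t) ≤ F 0 := by
    simpa using key Set.self_mem_Ici ht ht
  have hpos := Real.exp_pos (c * t)
  have h5 := (le_div_iff₀ hpos).2 h2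
  calc F t ≤ F 0 / Real.exp (c * t) := h5
    _ = F 0 * Real.exp (-(c * t)) := by rw [Real.exp_neg, div_eq_mul_inv]

/-- Cauchy–Schwarz step: `δ² |y'|² ≤ b² F` pointwise. -/
private lemma quad_aux (b d w pr pi ar ai : ℝ) (hd : 0 < d) (hdb : d < b) (hw : 0 ≤ w) :
    (pr^2 + pi^2) * d^2 ≤ b^2 * (((pr + (b-d)/2*ar)^2 + (pi + (b-d)/2*ai)^2)
      + ((pr + (b+d)/2*ar)^2 + (pi + (b+d)/2*ai)^2) + 2*w*(ar^2+ai^2)) := by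
  have hb : 0 < b := hd.trans hdb
  have h1 : d^2 * pr^2 ≤ (b^2+d^2)/2 * ((pr + (b-d)/2*ar)^2 + (pr + (b+d)/2*ar)^2) := by
    nlinarith [sq_nonneg ((b-d)/2*(pr + (b-d)/2*ar) + (b+d)/2*(pr + (b+d)/2*ar))]
  have h2 : d^2 * pi^2 ≤ (b^2+d^2)/2 * ((pi + (b-d)/2*ai)^2 + (pi + (b+d)/2*ai)^2) := by
    nlinarith [sq_nonneg ((b-d)/2*(pi + (b-d)/2*ai) + (b+d)/2*(pi + (b+d)/2*ai))]
  have hbd : 0 ≤ (b^2 - d^2)/2 := by nlinarith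
  have hS : 0 ≤ ((pr + (b-d)/2*ar)^2 + (pi + (b-d)/2*ai)^2)
      + ((pr + (b+d)/2*ar)^2 + (pi + (b+d)/2*ai)^2) := by positivity
  nlinarith [mul_nonneg hbd hS, mul_nonneg (mul_nonneg (sq_nonneg b) hw) (sq_nonneg ar),
    mul_nonneg (mul_nonneg (sq_nonneg b) hw) (sq_nonneg ai)]

/-- Initial-datum bound: `F 0 ≤ 34 ((Λ+m)|y 0|² + |y' 0|²)`. -/
private lemma init_aux (b d w L pr pi ar ai : ℝ) (hd : 0 < d) (hdb : d < b)
    (hL : b^2/8 ≤ L) (hwle : w ≤ L) :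
    ((pr + (b-d)/2*ar)^2 + (pi + (b-d)/2*ai)^2)
      + ((pr + (b+d)/2*ar)^2 + (pi + (b+d)/2*ai)^2) + 2*w*(ar^2+ai^2)
    ≤ 34 * (L*(ar^2+ai^2) + (pr^2+pi^2)) := by
  have hb : 0 < b := hd.trans hdb
  have hL0 : 0 < L := lt_of_lt_of_le (by positivity) hL
  nlinarith [sq_nonneg (pr - (b-d)/2*ar), sq_nonneg (pi - (b-d)/2*ai),
    sq_nonneg (pr - (b+d)/2*ar), sq_nonneg (pi - (b+d)/2*ai),
    mul_nonneg (by nlinarith : (0:ℝ) ≤ 8*L - b^2) (by positivity : (0:ℝ) ≤ ar^2+ai^2),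
    mul_nonneg (by nlinarith : (0:ℝ) ≤ L - w) (by positivity : (0:ℝ) ≤ ar^2+ai^2),
    mul_nonneg (by nlinarith : (0:ℝ) ≤ b^2 - ((b-d)/2)^2) (by positivity : (0:ℝ) ≤ ar^2+ai^2),
    mul_nonneg (by nlinarith : (0:ℝ) ≤ b^2 - ((b+d)/2)^2) (by positivity : (0:ℝ) ≤ ar^2+ai^2),
    mul_nonneg hL0.le (by positivity : (0:ℝ) ≤ ar^2+ai^2)]

set_option maxHeartbeats 1000000 in
/-- Large-frequency estimate for the time derivative: for `Λ > (b²/4 - m)/2` and any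
C² solution `y` of `y'' + b y' + (Λ + m) y = 0` on `[0,∞)`, one has
`|y'(t)|² ≤ C e^{(-b+√(½(b²-4m)))t} ((Λ+m)|y(0)|² + |y'(0)|²)` with `C = C(b,m)`. -/
theorem stmt_5 (b m : ℝ) (hb : 0 < b) (hm : 0 ≤ m) (hbm : 4 * m < b ^ 2) :
    ∃ C : ℝ, 0 < C ∧ ∀ Λ : ℝ, (b ^ 2 / 4 - m) / 2 < Λ →
      ∀ y : ℝ → ℂ, ContDiffOn ℝ 2 y (Set.Ici 0) →
      (∀ t ∈ Set.Ici (0 : ℝ),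
        derivWithin (derivWithin y (Set.Ici 0)) (Set.Ici 0) t
          + (b : ℂ) * derivWithin y (Set.Ici 0) t
          + ((Λ : ℂ) + (m : ℂ)) * y t = 0) →
      ∀ t : ℝ, 0 < t →
        ‖derivWithin y (Set.Ici 0) t‖ ^ 2 ≤
          C * Real.exp ((-b + Real.sqrt ((b ^ 2 - 4 * m) / 2)) * t) *
            ((Λ + m) * ‖y 0‖ ^ 2
              + ‖derivWithin y (Set.Ici 0) 0‖ ^ 2) := by
  have hsU : UniqueDiffOn ℝ (Set.Ici (0:ℝ)) := uniqueDiffOn_Ici 0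
  set δ := Real.sqrt ((b ^ 2 - 4 * m) / 2) with hδ_def
  have hδsq : δ ^ 2 = (b ^ 2 - 4 * m) / 2 := Real.sq_sqrt (by linarith)
  have hδpos : 0 < δ := Real.sqrt_pos.2 (by linarith)
  have hδb : δ < b := by nlinarith
  refine ⟨34 * b ^ 2 / δ ^ 2, by positivity, ?_⟩
  intro Λ hΛ y hy hode t ht
  set y1 := derivWithin y (Set.Ici (0:ℝ)) with hy1_def
  set y2 := derivWithin y1 (Set.Ici (0:ℝ)) with hy2_def
  have hΛm : b ^ 2 / 8 ≤ Λ + m := by linarith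
  have hωpos : 0 < Λ + m - (b ^ 2 - δ ^ 2) / 4 := by rw [hδsq]; linarith
  have hωle : Λ + m - (b ^ 2 - δ ^ 2) / 4 ≤ Λ + m := by nlinarith
  have hy1 : ∀ x ∈ Set.Ici (0:ℝ), HasDerivWithinAt y (y1 x) (Set.Ici 0) x := by
    intro x hx
    exact ((hy.differentiableOn (by norm_num)) x hx).hasDerivWithinAt
  have hy2 : ∀ x ∈ Set.Ici (0:ℝ), HasDerivWithinAt y1 (y2 x) (Set.Ici 0) x := by
    intro x hx
    exact (((hy.derivWithin hsU (m := 1) (by norm_num)).differentiableOn one_ne_zero) x hx).hasDerivWithinAt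
  -- the Lyapunov functional
  set F : ℝ → ℝ := fun x =>
      ⟪y1 x + (((b - δ)/2 : ℝ) : ℂ) * y x, y1 x + (((b - δ)/2 : ℝ) : ℂ) * y x⟫
    + ⟪y1 x + (((b + δ)/2 : ℝ) : ℂ) * y x, y1 x + (((b + δ)/2 : ℝ) : ℂ) * y x⟫
    + 2 * (Λ + m - (b ^ 2 - δ ^ 2) / 4) * ⟪y x, y x⟫ with hF_def
  set D : ℝ → ℝ := fun x =>
      (⟪y1 x + (((b - δ)/2 : ℝ) : ℂ) * y x, y2 x + (((b - δ)/2 : ℝ) : ℂ) * y1 x⟫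
        + ⟪y2 x + (((b - δ)/2 : ℝ) : ℂ) * y1 x, y1 x + (((b - δ)/2 : ℝ) : ℂ) * y x⟫)
    + (⟪y1 x + (((b + δ)/2 : ℝ) : ℂ) * y x, y2 x + (((b + δ)/2 : ℝ) : ℂ) * y1 x⟫
        + ⟪y2 x + (((b + δ)/2 : ℝ) : ℂ) * y1 x, y1 x + (((b + δ)/2 : ℝ) : ℂ) * y x⟫)
    + 2 * (Λ + m - (b ^ 2 - δ ^ 2) / 4) * (⟪y x, y1 x⟫ + ⟪y1 x, y x⟫) with hD_def
  -- expansion of F in coordinates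
  have hFx : ∀ x : ℝ, F x =
      (((y1 x).re + (b - δ)/2 * (y x).re) ^ 2 + ((y1 x).im + (b - δ)/2 * (y x).im) ^ 2)
    + (((y1 x).re + (b + δ)/2 * (y x).re) ^ 2 + ((y1 x).im + (b + δ)/2 * (y x).im) ^ 2)
    + 2 * (Λ + m - (b ^ 2 - δ ^ 2) / 4) * ((y x).re ^ 2 + (y x).im ^ 2) := by
    intro x
    simp only [hF_def, Complex.inner, Complex.mul_re, Complex.mul_im,
      Complex.add_re, Complex.add_im, Complex.conj_re, Complex.conj_im,
      Complex.ofReal_re, Complex.ofReal_im]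
    ring
  have hF : ∀ x ∈ Set.Ici (0:ℝ), HasDerivWithinAt F (D x) (Set.Ici 0) x := by
    intro x hx
    have h1 : HasDerivWithinAt (fun x => y1 x + (((b - δ)/2 : ℝ) : ℂ) * y x)
        (y2 x + (((b - δ)/2 : ℝ) : ℂ) * y1 x) (Set.Ici 0) x :=
      (hy2 x hx).add ((hy1 x hx).const_mul _)
    have h2 : HasDerivWithinAt (fun x => y1 x + (((b + δ)/2 : ℝ) : ℂ) * y x)
        (y2 x + (((b + δ)/2 : ℝ) : ℂ) * y1 x) (Set.Ici 0) x :=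
      (hy2 x hx).add ((hy1 x hx).const_mul _)
    exact ((h1.inner ℝ h1).add (h2.inner ℝ h2)).add
      (((hy1 x hx).inner ℝ (hy1 x hx)).const_mul _)
  have hle : ∀ x ∈ Set.Ici (0:ℝ), D x + (b - δ) * F x ≤ 0 := by
    intro x hx
    have hq : y2 x = -((b:ℂ) * y1 x) - ((Λ:ℂ) + (m:ℂ)) * y x := by
      linear_combination hode x hx
    have key : D x + (b - δ) * F x =
        -2 * δ * (((y1 x).re + (b - δ)/2 * (y x).re) ^ 2
                  + ((y1 x).im + (b - δ)/2 * (y x).im) ^ 2)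
        - 2 * δ * (Λ + m - (b ^ 2 - δ ^ 2) / 4) * ((y x).re ^ 2 + (y x).im ^ 2) := by
      rw [hFx x]
      simp only [hD_def, hq, Complex.inner, Complex.mul_re, Complex.mul_im,
        Complex.add_re, Complex.add_im, Complex.conj_re, Complex.conj_im,
        Complex.sub_re, Complex.sub_im, Complex.neg_re, Complex.neg_im,
        Complex.ofReal_re, Complex.ofReal_im]
      ring
    rw [key]
    nlinarith [mul_nonneg hδpos.le (by positivity : (0:ℝ) ≤
        ((y1 x).re + (b - δ)/2 * (y x).re) ^ 2 + ((y1 x).im + (b - δ)/2 * (y x).im) ^ 2),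
      mul_nonneg (mul_nonneg hδpos.le hωpos.le)
        (by positivity : (0:ℝ) ≤ (y x).re ^ 2 + (y x).im ^ 2)]
  have hdecay := gronwall_aux F D (b - δ) hF hle
  -- pointwise comparison: |y1 x|² δ² ≤ b² F x
  have habs : ∀ x : ℝ, ‖y1 x‖ ^ 2 * δ ^ 2 ≤ b ^ 2 * F x := by
    intro x
    have habs2 : ‖y1 x‖ ^ 2 = (y1 x).re ^ 2 + (y1 x).im ^ 2 := by
      rw [Complex.sq_norm, Complex.normSq_apply]; ring
    rw [habs2, hFx x]
    exact quad_aux b δ (Λ + m - (b ^ 2 - δ ^ 2) / 4) (y1 x).re (y1 x).im (y x).re (y x).im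
      hδpos hδb hωpos.le
  -- initial bound
  have hF0 : F 0 ≤ 34 * ((Λ + m) * ‖y 0‖ ^ 2 + ‖y1 0‖ ^ 2) := by
    have habs2 : ‖y1 0‖ ^ 2 = (y1 0).re ^ 2 + (y1 0).im ^ 2 := by
      rw [Complex.sq_norm, Complex.normSq_apply]; ring
    have habs3 : ‖y 0‖ ^ 2 = (y 0).re ^ 2 + (y 0).im ^ 2 := by
      rw [Complex.sq_norm, Complex.normSq_apply]; ring
    rw [habs2, habs3, hFx 0]
    exact init_aux b δ (Λ + m - (b ^ 2 - δ ^ 2) / 4) (Λ + m)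
      (y1 0).re (y1 0).im (y 0).re (y 0).im hδpos hδb hΛm hωle
  -- assemble
  set R : ℝ := (Λ + m) * ‖y 0‖ ^ 2 + ‖y1 0‖ ^ 2 with hR_def
  have hRnn : 0 ≤ R := by
    have h1 : (0:ℝ) < Λ + m := by nlinarith
    have h2 := norm_nonneg (y 0)
    have h3 := norm_nonneg (y1 0)
    positivity
  have hE : 0 < Real.exp (-((b - δ) * t)) := Real.exp_pos _
  have h2 : F t ≤ 34 * R * Real.exp (-((b - δ) * t)) := by
    have h3 := hdecay t ht.le
    nlinarith [hF0, hE]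
  have hfin : ‖y1 t‖ ^ 2 ≤ 34 * b ^ 2 / δ ^ 2 * Real.exp (-((b - δ) * t)) * R := by
    rw [div_mul_eq_mul_div, div_mul_eq_mul_div, le_div_iff₀ (by positivity : (0:ℝ) < δ ^ 2)]
    nlinarith [habs t, h2, sq_nonneg b, hE]
  have heq : (-b + δ) * t = -((b - δ) * t) := by ring
  rw [heq]
  exact hfin
end

section
/- Let $b>0$ and $m\geq 0$ satisfy $b^2>4m$. Then there exists a constant $C>0$, depending only on $b$ and $m$, such that for every real number $\Lambda$ with $\Lambda>\tfrac12\left(\tfrac{b^2}{4}-m\right)$, every twice continuously differentiable function $y:[0,\infty)\to\mathbb{C}$ satisfying $y''(t)+b\,y'(t)+(\Lambda+m)\,y(t)=0$ for all $t\geq 0$, and every $t>0$, one has $\Lambda\,|y(t)|^2\leq C\,e^{\left(-b+\sqrt{\frac12(b^2-4m)}\right)t}\left(\Lambda\,|y(0)|^2+|y'(0)|^2\right)$. -/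
open Set Real

private lemma quad_aux_s6 (a c P e X Y W : ℝ) (ha : 0 < a) (hc : 0 ≤ c) (hP : 0 < P)
    (hX : 0 ≤ X) (hY : 0 ≤ Y) (hW : W^2 ≤ X*Y) (he2 : e^2 ≤ 4*(a*(c*P))) :
    0 ≤ a*X + c*P*Y + e*W := by
  have hS : 0 ≤ a*X + c*P*Y := by positivity
  have h1 : e^2*W^2 ≤ 4*(a*(c*P))*(X*Y) :=
    mul_le_mul he2 hW (sq_nonneg W) (by positivity)
  have h2 : (e*W)^2 ≤ (a*X + c*P*Y)^2 := by nlinarith [sq_nonneg (a*X - c*P*Y)]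
  nlinarith [h2, hS]

set_option maxHeartbeats 4000000 in
/-- Large-frequency estimate for the homogeneous-Sobolev-weighted quantity: for
`Λ > (b²/4 - m)/2` and any C² solution `y` of `y'' + b y' + (Λ + m) y = 0` on `[0,∞)`,
one has `Λ|y(t)|² ≤ C e^{(-b+√(½(b²-4m)))t} (Λ|y(0)|² + |y'(0)|²)` with `C = C(b,m)`. -/
theorem stmt_6 (b m : ℝ) (hb : 0 < b) (hm : 0 ≤ m) (hbm : 4 * m < b ^ 2) :
    ∃ C : ℝ, 0 < C ∧ ∀ Λ : ℝ, (b ^ 2 / 4 - m) / 2 < Λ →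
      ∀ y : ℝ → ℂ, ContDiffOn ℝ 2 y (Set.Ici 0) →
      (∀ t ∈ Set.Ici (0 : ℝ),
        derivWithin (derivWithin y (Set.Ici 0)) (Set.Ici 0) t
          + (b : ℂ) * derivWithin y (Set.Ici 0) t
          + ((Λ : ℂ) + (m : ℂ)) * y t = 0) →
      ∀ t : ℝ, 0 < t →
        Λ * ‖y t‖ ^ 2 ≤
          C * Real.exp ((-b + Real.sqrt ((b ^ 2 - 4 * m) / 2)) * t) *
            (Λ * ‖y 0‖ ^ 2
              + ‖derivWithin y (Set.Ici 0) 0‖ ^ 2) := by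
  have hK : 0 < b^2 - 4*m := by linarith
  set s : ℝ := Real.sqrt ((b ^ 2 - 4 * m) / 2) with hs_def
  have hs_sq : s^2 = (b^2 - 4*m)/2 := Real.sq_sqrt (by positivity)
  have hs_pos : 0 < s := Real.sqrt_pos.mpr (by positivity)
  have hs_lt_b : s < b := by nlinarith [hs_sq, hs_pos]
  set ε : ℝ := (b^2 + 4*m)/(2*b) with hε_def
  have hε_pos : 0 < ε := by positivity
  have hεb : ε * (2*b) = b^2 + 4*m := by rw [hε_def]; field_simp
  have hbe : b - ε = (b^2 - 4*m)/(2*b) := by rw [hε_def]; field_simp; ring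
  have ha : 0 < b + s - ε := by
    have : 0 < (b^2 - 4*m)/(2*b) := by positivity
    linarith
  have hc : 0 ≤ ε - b + s := by
    have h1 : ((b^2-4*m)/(2*b))^2 ≤ s^2 := by
      rw [hs_sq, div_pow, div_le_div_iff₀ (by positivity) (by positivity)]
      nlinarith [sq_nonneg (b^2-4*m), mul_pos hb hb]
    nlinarith [hs_pos, hbe]
  have hm4 : m ≤ ε^2/4 := by nlinarith [sq_nonneg (b^2 - 4*m), hεb, sq_nonneg b]
  set σ : ℝ := b - s with hσ_def
  set c2 : ℝ := ((b^2-4*m)/8 + m - ε^2/4) / ((b^2-4*m)/8) with hc2_def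
  have hc2num : 0 < (b^2-4*m)/8 + m - ε^2/4 := by
    nlinarith [hεb, mul_pos hb hb, hK, sq_nonneg (b^2-4*m)]
  have hc2 : 0 < c2 := by rw [hc2_def]; positivity
  set C1 : ℝ := 1 + ε/2 + (8*m + 4*ε)/(b^2-4*m) with hC1_def
  have hC1 : 0 < C1 := by rw [hC1_def]; positivity
  refine ⟨C1/c2, by positivity, ?_⟩
  intro Λ hΛ y hy hode t ht
  set Y1 := derivWithin y (Set.Ici (0:ℝ)) with hY1_def
  set Y2 := derivWithin Y1 (Set.Ici (0:ℝ)) with hY2_def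
  have hΛlb : (b^2-4*m)/8 < Λ := by linarith
  have hΛpos : 0 < Λ := lt_trans (by positivity) hΛlb
  set P : ℝ := Λ + m with hP_def
  have hPlb : (b^2 + 4*m)/8 < P := by rw [hP_def]; linarith
  have hP : 0 < P := by positivity
  -- key frequency inequality
  have hkey : (ε*s)^2 ≤ 4*((b+s-ε)*((ε-b+s)*P)) := by
    have h1 : (b+s-ε)*((ε-b+s)*P) = (s^2 - (b-ε)^2)*P := by ring
    rw [h1, mul_pow, hs_sq]
    rw [← mul_le_mul_iff_of_pos_right (show (0:ℝ) < 4*b^2 by positivity)]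
    have e1 : ε^2*((b^2-4*m)/2)*(4*b^2) = (b^2+4*m)^2*(b^2-4*m)/2 := by
      rw [hε_def]; field_simp; ring
    have e2 : 4*(((b^2-4*m)/2 - (b-ε)^2)*P)*(4*b^2) = 4*P*((b^2-4*m)*(b^2+4*m)) := by
      rw [hε_def]; field_simp; ring
    rw [e1, e2]
    nlinarith [mul_lt_mul_of_pos_left hPlb
      (show (0:ℝ) < (b^2-4*m)*(b^2+4*m) by positivity)]
  -- calculus setup
  have hyc : ContinuousOn y (Set.Ici 0) := hy.continuousOn
  have hY1cd : ContDiffOn ℝ 1 Y1 (Set.Ici 0) := hy.derivWithin (uniqueDiffOn_Ici 0) (by norm_num)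
  have hY1c : ContinuousOn Y1 (Set.Ici 0) := hY1cd.continuousOn
  have hdy : DifferentiableOn ℝ y (Set.Ici 0) := hy.differentiableOn (by norm_num)
  have hdY1 : DifferentiableOn ℝ Y1 (Set.Ici 0) := hY1cd.differentiableOn (by norm_num)
  have hyD : ∀ x : ℝ, 0 < x → HasDerivAt y (Y1 x) x := by
    intro x hx
    have h1 : DifferentiableAt ℝ y x := (hdy x (le_of_lt hx)).differentiableAt (Ici_mem_nhds hx)
    rw [hY1_def, derivWithin_of_mem_nhds (Ici_mem_nhds hx)]
    exact h1.hasDerivAt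
  have hY1D : ∀ x : ℝ, 0 < x → HasDerivAt Y1 (Y2 x) x := by
    intro x hx
    have h1 : DifferentiableAt ℝ Y1 x := (hdY1 x (le_of_lt hx)).differentiableAt (Ici_mem_nhds hx)
    rw [hY2_def, derivWithin_of_mem_nhds (Ici_mem_nhds hx)]
    exact h1.hasDerivAt
  set F : ℝ → ℝ := fun x => P * ((y x).re*(y x).re + (y x).im*(y x).im)
      + ((Y1 x).re*(Y1 x).re + (Y1 x).im*(Y1 x).im)
      + ε * ((Y1 x).re*(y x).re + (Y1 x).im*(y x).im) with hF_def
  set G : ℝ → ℝ := fun x => Real.exp (σ*x) * F x with hG_def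
  -- differentiability & derivative bound at points of Ioi 0
  have hGD : ∀ x ∈ Set.Ioi (0:ℝ), ∃ g, HasDerivAt G g x ∧ g ≤ 0 := by
    intro x hx
    have hx' : (0:ℝ) < x := hx
    have hyr : HasDerivAt (fun u => (y u).re) ((Y1 x).re) x :=
      Complex.reCLM.hasFDerivAt.comp_hasDerivAt x (hyD x hx')
    have hyi : HasDerivAt (fun u => (y u).im) ((Y1 x).im) x :=
      Complex.imCLM.hasFDerivAt.comp_hasDerivAt x (hyD x hx')
    have hpr : HasDerivAt (fun u => (Y1 u).re) ((Y2 x).re) x :=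
      Complex.reCLM.hasFDerivAt.comp_hasDerivAt x (hY1D x hx')
    have hpi : HasDerivAt (fun u => (Y1 u).im) ((Y2 x).im) x :=
      Complex.imCLM.hasFDerivAt.comp_hasDerivAt x (hY1D x hx')
    set D : ℝ := P * (((Y1 x).re*(y x).re + (y x).re*(Y1 x).re) + ((Y1 x).im*(y x).im + (y x).im*(Y1 x).im))
          + (((Y2 x).re*(Y1 x).re + (Y1 x).re*(Y2 x).re) + ((Y2 x).im*(Y1 x).im + (Y1 x).im*(Y2 x).im))
          + ε * (((Y2 x).re*(y x).re + (Y1 x).re*(Y1 x).re) + ((Y2 x).im*(y x).im + (Y1 x).im*(Y1 x).im)) with hD_def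
    have hF' : HasDerivAt F D x := by
      rw [hF_def, hD_def]
      exact ((((hyr.mul hyr).add (hyi.mul hyi)).const_mul P).add
        ((hpr.mul hpr).add (hpi.mul hpi))).add
        (((hpr.mul hyr).add (hpi.mul hyi)).const_mul ε)
    have hodeX := hode x (le_of_lt hx')
    have hqr : (Y2 x).re = -(b*(Y1 x).re) - P*(y x).re := by
      have h1 := congrArg Complex.re hodeX
      simp [Complex.add_re, Complex.mul_re, Complex.ofReal_re, Complex.ofReal_im] at h1
      rw [hP_def]; linarith
    have hqi : (Y2 x).im = -(b*(Y1 x).im) - P*(y x).im := by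
      have h1 := congrArg Complex.im hodeX
      simp [Complex.add_im, Complex.mul_im, Complex.ofReal_re, Complex.ofReal_im] at h1
      rw [hP_def]; linarith
    have hexp : HasDerivAt (fun u => Real.exp (σ*u)) (Real.exp (σ*x)*σ) x := by
      have h0 : HasDerivAt (fun u : ℝ => σ*u) σ x := by
        simpa using (hasDerivAt_id x).const_mul σ
      simpa using h0.exp
    refine ⟨Real.exp (σ*x)*σ*F x + Real.exp (σ*x)*D, by rw [hG_def]; exact hexp.mul hF', ?_⟩
    have hXY : ((Y1 x).re*(y x).re + (Y1 x).im*(y x).im)^2 ≤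
        ((Y1 x).re*(Y1 x).re + (Y1 x).im*(Y1 x).im) * ((y x).re*(y x).re + (y x).im*(y x).im) := by
      linarith [sq_nonneg ((Y1 x).re*(y x).im - (Y1 x).im*(y x).re)]
    have hquad := quad_aux_s6 (b+s-ε) (ε-b+s) P (ε*s)
      ((Y1 x).re*(Y1 x).re + (Y1 x).im*(Y1 x).im)
      ((y x).re*(y x).re + (y x).im*(y x).im)
      ((Y1 x).re*(y x).re + (Y1 x).im*(y x).im)
      ha hc hP (add_nonneg (mul_self_nonneg _) (mul_self_nonneg _))
      (add_nonneg (mul_self_nonneg _) (mul_self_nonneg _)) hXY hkey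
    have hFb : σ * F x + D ≤ 0 := by
      simp only [hF_def, hD_def]
      rw [hqr, hqi, hσ_def]
      linarith [hquad]
    calc Real.exp (σ*x)*σ*F x + Real.exp (σ*x)*D
        = Real.exp (σ*x) * (σ*F x + D) := by ring
      _ ≤ Real.exp (σ*x) * 0 := mul_le_mul_of_nonneg_left hFb (Real.exp_nonneg _)
      _ = 0 := mul_zero _
  -- continuity
  have h1c : ContinuousOn (fun x => (y x).re) (Set.Ici (0:ℝ)) :=
    Complex.continuous_re.comp_continuousOn hyc
  have h2c : ContinuousOn (fun x => (y x).im) (Set.Ici (0:ℝ)) :=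
    Complex.continuous_im.comp_continuousOn hyc
  have h3c : ContinuousOn (fun x => (Y1 x).re) (Set.Ici (0:ℝ)) :=
    Complex.continuous_re.comp_continuousOn hY1c
  have h4c : ContinuousOn (fun x => (Y1 x).im) (Set.Ici (0:ℝ)) :=
    Complex.continuous_im.comp_continuousOn hY1c
  have hFcont : ContinuousOn F (Set.Ici 0) := by
    rw [hF_def]
    exact ((continuousOn_const.mul ((h1c.mul h1c).add (h2c.mul h2c))).add
      ((h3c.mul h3c).add (h4c.mul h4c))).add
      (continuousOn_const.mul ((h3c.mul h1c).add (h4c.mul h2c)))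
  have hGcont : ContinuousOn G (Set.Ici 0) := by
    rw [hG_def]
    exact ((Real.continuous_exp.comp (continuous_const.mul continuous_id)).continuousOn).mul hFcont
  have hanti : AntitoneOn G (Set.Ici 0) := by
    apply antitoneOn_of_deriv_nonpos (convex_Ici 0) hGcont
    · rw [interior_Ici]
      intro x hx
      obtain ⟨g, hg, _⟩ := hGD x hx
      exact hg.differentiableAt.differentiableWithinAt
    · rw [interior_Ici]
      intro x hx
      obtain ⟨g, hg, hle⟩ := hGD x hx
      rw [hg.deriv]; exact hle
  have hGt : G t ≤ G 0 := hanti Set.self_mem_Ici (show t ∈ Set.Ici (0:ℝ) from ht.le) ht.le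
  have h1 : Real.exp (σ*t) * F t ≤ F 0 := by
    simp only [hG_def, mul_zero, Real.exp_zero, one_mul] at hGt
    exact hGt
  have habs : ∀ z : ℂ, ‖z‖ ^ 2 = z.re*z.re + z.im*z.im := by
    intro z; rw [Complex.sq_norm, Complex.normSq_apply]
  have hVt : 0 ≤ (y t).re*(y t).re + (y t).im*(y t).im :=
    add_nonneg (mul_self_nonneg _) (mul_self_nonneg _)
  have hV0 : 0 ≤ (y 0).re*(y 0).re + (y 0).im*(y 0).im :=
    add_nonneg (mul_self_nonneg _) (mul_self_nonneg _)
  have hX0 : 0 ≤ (Y1 0).re*(Y1 0).re + (Y1 0).im*(Y1 0).im :=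
    add_nonneg (mul_self_nonneg _) (mul_self_nonneg _)
  have hlow : c2 * (Λ * ((y t).re*(y t).re + (y t).im*(y t).im)) ≤ F t := by
    have step1 : (Λ + m - ε^2/4) * ((y t).re*(y t).re + (y t).im*(y t).im) ≤ F t := by
      simp only [hF_def, hP_def]
      linarith [sq_nonneg ((Y1 t).re + ε/2*(y t).re), sq_nonneg ((Y1 t).im + ε/2*(y t).im)]
    have step2 : c2 * Λ ≤ Λ + m - ε^2/4 := by
      rw [hc2_def, div_mul_eq_mul_div, div_le_iff₀ (show (0:ℝ) < (b^2-4*m)/8 by positivity)]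
      linarith [mul_le_mul_of_nonneg_left hΛlb.le (show (0:ℝ) ≤ ε^2/4 - m by linarith)]
    calc c2 * (Λ * ((y t).re*(y t).re + (y t).im*(y t).im))
        = (c2*Λ) * ((y t).re*(y t).re + (y t).im*(y t).im) := by ring
      _ ≤ (Λ + m - ε^2/4) * ((y t).re*(y t).re + (y t).im*(y t).im) :=
          mul_le_mul_of_nonneg_right step2 hVt
      _ ≤ F t := step1
  have hup : F 0 ≤ C1 * (Λ * ((y 0).re*(y 0).re + (y 0).im*(y 0).im)
      + ((Y1 0).re*(Y1 0).re + (Y1 0).im*(Y1 0).im)) := by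
    have h8 : ((8*m+4*ε)/(b^2-4*m))*((b^2-4*m)/8) = m + ε/2 := by
      rw [div_mul_div_comm, mul_comm (8*m+4*ε), mul_div_mul_left _ _ hK.ne']; ring
    have h9 := mul_le_mul_of_nonneg_left hΛlb.le
      (show (0:ℝ) ≤ (8*m+4*ε)/(b^2-4*m) by positivity)
    have hqΛ : m + ε/2 ≤ ((8*m+4*ε)/(b^2-4*m))*Λ := by linarith [h8, h9]
    have hW0 : 2*((Y1 0).re*(y 0).re + (Y1 0).im*(y 0).im) ≤
        ((y 0).re*(y 0).re + (y 0).im*(y 0).im)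
        + ((Y1 0).re*(Y1 0).re + (Y1 0).im*(Y1 0).im) := by
      linarith [sq_nonneg ((Y1 0).re - (y 0).re), sq_nonneg ((Y1 0).im - (y 0).im)]
    have hεW0 := mul_le_mul_of_nonneg_left hW0 hε_pos.le
    simp only [hF_def, hP_def, hC1_def]
    linarith [hεW0, mul_le_mul_of_nonneg_right hqΛ hV0,
      mul_nonneg (mul_nonneg hε_pos.le hΛpos.le) hV0,
      mul_nonneg (show (0:ℝ) ≤ (8*m+4*ε)/(b^2-4*m) by positivity) hX0]
  rw [habs, habs, habs]
  have hexparg : (-b+s)*t = -(σ*t) := by rw [hσ_def]; ring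
  have hee : Real.exp (-(σ*t)) * Real.exp (σ*t) = 1 := by
    rw [← Real.exp_add]; simp
  have h2 : c2 * (Λ * ((y t).re*(y t).re + (y t).im*(y t).im)) ≤
      Real.exp (-(σ*t)) * (C1 * (Λ * ((y 0).re*(y 0).re + (y 0).im*(y 0).im)
        + ((Y1 0).re*(Y1 0).re + (Y1 0).im*(Y1 0).im))) := by
    calc c2 * (Λ * ((y t).re*(y t).re + (y t).im*(y t).im)) ≤ F t := hlow
      _ = Real.exp (-(σ*t)) * (Real.exp (σ*t) * F t) := by
          rw [← mul_assoc, hee, one_mul]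
      _ ≤ Real.exp (-(σ*t)) * F 0 := mul_le_mul_of_nonneg_left h1 (Real.exp_nonneg _)
      _ ≤ _ := mul_le_mul_of_nonneg_left hup (Real.exp_nonneg _)
  rw [hexparg]
  rw [show C1/c2 * Real.exp (-(σ*t)) * (Λ * ((y 0).re*(y 0).re + (y 0).im*(y 0).im)
      + ((Y1 0).re*(Y1 0).re + (Y1 0).im*(Y1 0).im))
      = (Real.exp (-(σ*t)) * (C1 * (Λ * ((y 0).re*(y 0).re + (y 0).im*(y 0).im)
        + ((Y1 0).re*(Y1 0).re + (Y1 0).im*(Y1 0).im))))/c2 from by ring]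
  rw [le_div_iff₀ hc2]
  linarith [h2]
end

section
/- Let $b>0$ and $m\geq 0$ satisfy $b^2>4m$. Then there exists a constant $C>0$, depending only on $b$ and $m$, such that for every real number $\Lambda>0$, every twice continuously differentiable function $y:[0,\infty)\to\mathbb{C}$ satisfying $y''(t)+b\,y'(t)+(\Lambda+m)\,y(t)=0$ for all $t\geq 0$, and every $t>0$, one has $|y(t)|^2\leq C\,e^{\left(-b+\sqrt{b^2-m}\right)t}\left(|y(0)|^2+|y'(0)|^2\right)$. -/
open Set Complex

set_option maxHeartbeats 2000000


lemma mvt_Ici {f f' : ℝ → ℂ} {T C : ℝ} (hT : 0 ≤ T)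
    (hf : ∀ t ∈ Set.Ici (0:ℝ), HasDerivWithinAt f (f' t) (Set.Ici 0) t)
    (hC : ∀ t ∈ Set.Icc (0:ℝ) T, ‖f' t‖ ≤ C) :
    ‖f T - f 0‖ ≤ C * T := by
  have h := Convex.norm_image_sub_le_of_norm_hasDerivWithin_le
    (f := f) (f' := f') (s := Set.Icc (0:ℝ) T)
    (fun x hx => (hf x (by exact hx.1)).mono (Icc_subset_Ici_self))
    hC (convex_Icc 0 T) (left_mem_Icc.2 hT) (right_mem_Icc.2 hT)
  simpa [_root_.abs_of_nonneg hT] using h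

lemma cexp_hasDerivAt (c : ℂ) (t : ℝ) :
    HasDerivAt (fun s : ℝ => Complex.exp (c * s)) (c * Complex.exp (c * t)) t := by
  have h0 : HasDerivAt (fun z : ℂ => c * z) c (t:ℂ) := by
    simpa using (hasDerivAt_id (t:ℂ)).const_mul c
  have h1 := h0.cexp
  have h2 := h1.comp_ofReal
  simpa [mul_comm] using h2

lemma key (b m Λ : ℝ) (r₁ r₂ : ℂ)
    (hsum : r₁ + r₂ = -(b:ℂ)) (hprod : r₁ * r₂ = (Λ:ℂ) + (m:ℂ))
    (hre : r₂.re ≤ r₁.re)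
    (y : ℝ → ℂ) (hy : ContDiffOn ℝ 2 y (Set.Ici 0))
    (hODE : ∀ t ∈ Set.Ici (0:ℝ),
        derivWithin (derivWithin y (Set.Ici 0)) (Set.Ici 0) t
          + (b : ℂ) * derivWithin y (Set.Ici 0) t
          + ((Λ : ℂ) + (m : ℂ)) * y t = 0)
    (T : ℝ) (hT : 0 ≤ T) :
    ‖y T‖ ≤ Real.exp (r₁.re * T) *
      (‖y 0‖ + ‖derivWithin y (Set.Ici 0) 0 - r₁ * y 0‖ * T)
    ∧ (r₁ ≠ r₂ → ‖y T‖ ≤ Real.exp (r₁.re * T) *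
      (‖y 0‖ + 2 * ‖derivWithin y (Set.Ici 0) 0 - r₁ * y 0‖ / ‖r₂ - r₁‖)) := by
  have hU : UniqueDiffOn ℝ (Set.Ici (0:ℝ)) := uniqueDiffOn_Ici 0
  set y₁ := derivWithin y (Set.Ici 0) with hy₁def
  set y₂ := derivWithin y₁ (Set.Ici 0) with hy₂def
  have hy' : ∀ t ∈ Set.Ici (0:ℝ), HasDerivWithinAt y (y₁ t) (Set.Ici 0) t := by
    intro t ht
    exact (hy.differentiableOn (by norm_num) t ht).hasDerivWithinAt
  have hy₁ : ContDiffOn ℝ 1 y₁ (Set.Ici 0) := hy.derivWithin hU (by norm_num)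
  have hy₁' : ∀ t ∈ Set.Ici (0:ℝ), HasDerivWithinAt y₁ (y₂ t) (Set.Ici 0) t := by
    intro t ht
    exact (hy₁.differentiableOn (by norm_num) t ht).hasDerivWithinAt
  set w : ℝ → ℂ := fun t => y₁ t - r₁ * y t with hwdef
  have hw : ∀ t ∈ Set.Ici (0:ℝ), HasDerivWithinAt w (r₂ * w t) (Set.Ici 0) t := by
    intro t ht
    have h := (hy₁' t ht).sub ((hy' t ht).const_mul r₁)
    have heq : y₂ t - r₁ * y₁ t = r₂ * w t := by
      have hode := hODE t ht
      simp only [hwdef]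
      linear_combination hode - (y₁ t) * hsum + (y t) * hprod
    rwa [heq] at h
  -- w t = exp (r₂ t) * w 0
  have hwval : ∀ t ∈ Set.Ici (0:ℝ), w t = Complex.exp (r₂ * t) * w 0 := by
    intro t ht
    set W : ℝ → ℂ := fun s => Complex.exp (-r₂ * s) * w s with hWdef
    have hW : ∀ s ∈ Set.Ici (0:ℝ), HasDerivWithinAt W 0 (Set.Ici 0) s := by
      intro s hs
      have h := ((cexp_hasDerivAt (-r₂) s).hasDerivWithinAt).mul (hw s hs)
      convert h using 1
      · rfl
      · rfl
      ring
    have h := mvt_Ici (C := 0) ht hW (fun s _ => by simp)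
    rw [zero_mul] at h
    have h0 : W t = W 0 := sub_eq_zero.mp (norm_le_zero_iff.mp h)
    have h1 : Complex.exp (-r₂ * t) * w t = w 0 := by
      simpa [hWdef] using h0
    calc w t = Complex.exp (r₂ * t) * (Complex.exp (-r₂ * t) * w t) := by
          rw [← mul_assoc, ← Complex.exp_add]
          norm_num
      _ = Complex.exp (r₂ * t) * w 0 := by rw [h1]
  -- g
  set g : ℝ → ℂ := fun t => Complex.exp (-r₁ * t) * y t with hgdef
  have hg : ∀ t ∈ Set.Ici (0:ℝ),
      HasDerivWithinAt g (Complex.exp ((r₂ - r₁) * t) * w 0) (Set.Ici 0) t := by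
    intro t ht
    have h := ((cexp_hasDerivAt (-r₁) t).hasDerivWithinAt).mul (hy' t ht)
    have heq : -r₁ * Complex.exp (-r₁ * t) * y t + Complex.exp (-r₁ * t) * y₁ t
        = Complex.exp ((r₂ - r₁) * t) * w 0 := by
      have : Complex.exp (-r₁ * t) * w t = Complex.exp ((r₂ - r₁) * t) * w 0 := by
        rw [hwval t ht, ← mul_assoc, ← Complex.exp_add]
        ring_nf
      calc -r₁ * Complex.exp (-r₁ * t) * y t + Complex.exp (-r₁ * t) * y₁ t
          = Complex.exp (-r₁ * t) * w t := by simp only [hwdef]; ring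
        _ = _ := this
    rwa [heq] at h
  have hg0 : g 0 = y 0 := by simp [hgdef]
  have habs_exp : ∀ (c : ℂ) (s : ℝ), ‖Complex.exp (c * s)‖ = Real.exp (c.re * s) := by
    intro c s
    rw [Complex.norm_exp]
    norm_num [Complex.mul_re]
  have hyT : ∀ M : ℝ, ‖g T‖ ≤ M → ‖y T‖ ≤ Real.exp (r₁.re * T) * M := by
    intro M hM
    have : y T = Complex.exp (r₁ * T) * g T := by
      simp only [hgdef]
      rw [← mul_assoc, ← Complex.exp_add]
      norm_num
    rw [this, norm_mul, habs_exp]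
    exact mul_le_mul_of_nonneg_left hM (Real.exp_nonneg _)
  have hw0 : w 0 = y₁ 0 - r₁ * y 0 := rfl
  constructor
  · -- part 1
    have h := mvt_Ici (C := ‖w 0‖) hT hg ?_
    · refine hyT _ ?_
      rw [hg0] at h
      have := (norm_sub_norm_le (g T) (y 0)).trans h
      have h2 : ‖g T‖ ≤ ‖y 0‖ + ‖w 0‖ * T := by
        simpa using (by linarith [this] : ‖g T‖ ≤ ‖(y 0 : ℂ)‖ + ‖w 0‖ * T)
      simpa [hw0] using h2
    · intro s hs
      have : ‖Complex.exp ((r₂ - r₁) * s) * w 0‖ = Real.exp ((r₂.re - r₁.re) * s) * ‖w 0‖ := by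
        rw [norm_mul]
        norm_num [habs_exp, Complex.sub_re]
      rw [this]
      have hle : Real.exp ((r₂.re - r₁.re) * s) ≤ 1 := by
        apply Real.exp_le_one_iff.mpr
        apply mul_nonpos_of_nonpos_of_nonneg <;> [linarith; exact hs.1]
      nlinarith [norm_nonneg (w 0), hle, Real.exp_nonneg ((r₂.re - r₁.re) * s)]
  · -- part 2
    intro hne
    have hsep : r₂ - r₁ ≠ 0 := sub_ne_zero.2 (Ne.symm hne)
    set h : ℝ → ℂ := fun t => g t - w 0 * (r₂ - r₁)⁻¹ * Complex.exp ((r₂ - r₁) * t) with hhdef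
    have hh : ∀ t ∈ Set.Ici (0:ℝ), HasDerivWithinAt h 0 (Set.Ici 0) t := by
      intro t ht
      have h1 := (hg t ht).sub ((((cexp_hasDerivAt (r₂ - r₁) t).hasDerivWithinAt).const_mul
        (w 0 * (r₂ - r₁)⁻¹)))
      convert h1 using 1
      · rfl
      · rfl
      field_simp
      ring
    have hmvt := mvt_Ici (C := 0) hT hh (fun s _ => by simp)
    rw [zero_mul] at hmvt
    have h0 : h T = h 0 := sub_eq_zero.mp (norm_le_zero_iff.mp hmvt)
    have hgT : g T = y 0 + w 0 * (r₂ - r₁)⁻¹ * (Complex.exp ((r₂ - r₁) * T) - 1) := by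
      have h1 := h0
      simp only [hhdef, Complex.ofReal_zero, mul_zero, Complex.exp_zero, hg0] at h1
      linear_combination h1
    refine hyT _ ?_
    rw [hgT]
    have h1 : ‖Complex.exp ((r₂ - r₁) * T) - 1‖ ≤ 2 := by
      calc ‖Complex.exp ((r₂ - r₁) * T) - 1‖
          ≤ ‖Complex.exp ((r₂ - r₁) * T)‖ + 1 := by
            simpa [sub_eq_add_neg] using norm_add_le (Complex.exp ((r₂ - r₁) * T)) (-1)
        _ ≤ 2 := by
            rw [habs_exp]
            have : Real.exp ((r₂.re - r₁.re) * T) ≤ 1 := by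
              apply Real.exp_le_one_iff.mpr
              apply mul_nonpos_of_nonpos_of_nonneg <;> [linarith; exact hT]
            simpa [Complex.sub_re] using by linarith
    calc ‖y 0 + w 0 * (r₂ - r₁)⁻¹ * (Complex.exp ((r₂ - r₁) * T) - 1)‖
        ≤ ‖y 0‖ + ‖w 0‖ * (‖r₂ - r₁‖)⁻¹ *
            ‖Complex.exp ((r₂ - r₁) * T) - 1‖ := by
          refine (norm_add_le _ _).trans ?_
          simp [map_mul]
      _ ≤ ‖y 0‖ + 2 * ‖w 0‖ / ‖r₂ - r₁‖ := by
          have hsep' : 0 < ‖r₂ - r₁‖ := norm_pos_iff.mpr hsep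
          rw [div_eq_mul_inv]
          have := mul_le_mul_of_nonneg_left h1
            (mul_nonneg (norm_nonneg (w 0)) (inv_nonneg.2 hsep'.le))
          nlinarith [this]

lemma rootsAux (b m Λ D : ℝ) (hb : 0 < b) (hm : 0 ≤ m) (hΛ : 0 < Λ) (hbm : 4*m < b^2)
    (hDdef : D = b^2 - 4*(Λ+m)) :
    ∃ r₁ r₂ : ℂ, r₁ + r₂ = -(b:ℂ) ∧ r₁*r₂ = (Λ:ℂ)+(m:ℂ) ∧ r₂.re ≤ r₁.re ∧
      ‖r₂ - r₁‖^2 = |D| ∧ ‖r₁‖ ^ 2 ≤ (b^2+|D|)/4 ∧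
      2*r₁.re ≤ -b + Real.sqrt (b^2 - m) ∧ 2*r₁.re ≤ -b + Real.sqrt (max D 0) := by
  by_cases hD : 0 ≤ D
  · set sD := Real.sqrt D with hsD
    have hs0 : 0 ≤ sD := Real.sqrt_nonneg D
    have hsq2 : sD^2 = D := Real.sq_sqrt hD
    refine ⟨(((-b + sD)/2 : ℝ) : ℂ), (((-b - sD)/2 : ℝ) : ℂ), ?_, ?_, ?_, ?_, ?_, ?_, ?_⟩
    · push_cast; ring
    · have hr : ((-b + sD)/2) * ((-b - sD)/2) = Λ + m := by
        rw [hDdef] at hsq2; linear_combination ((-1:ℝ)/4) * hsq2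
      rw [← Complex.ofReal_mul, hr]; push_cast; ring
    · simp only [Complex.ofReal_re]; linarith
    · rw [← Complex.ofReal_sub]
      rw [Complex.norm_real, Real.norm_eq_abs]
      rw [_root_.abs_of_nonneg hD]
      have : (-b - sD)/2 - (-b + sD)/2 = -sD := by ring
      rw [this, abs_neg, _root_.abs_of_nonneg hs0, hsq2]
    · rw [Complex.norm_real, Real.norm_eq_abs, _root_.sq_abs, _root_.abs_of_nonneg hD]
      nlinarith
    · simp only [Complex.ofReal_re]
      have hle : D ≤ b^2 - m := by rw [hDdef]; linarith
      have := Real.sqrt_le_sqrt hle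
      rw [← hsD] at this
      linarith
    · simp only [Complex.ofReal_re]
      rw [max_eq_left hD, ← hsD]
      linarith
  · push_neg at hD
    set s := Real.sqrt (-D) with hsdef
    have hs0 : 0 ≤ s := Real.sqrt_nonneg _
    have hsq2 : s^2 = -D := Real.sq_sqrt (by linarith)
    refine ⟨⟨-b/2, s/2⟩, ⟨-b/2, -s/2⟩, ?_, ?_, ?_, ?_, ?_, ?_, ?_⟩
    · apply Complex.ext <;> simp <;> ring
    · apply Complex.ext <;>
        simp [Complex.mul_re, Complex.mul_im] <;> nlinarith
    · simp
    · have : (⟨-b/2, -s/2⟩ - ⟨-b/2, s/2⟩ : ℂ) = ⟨0, -s⟩ := by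
        apply Complex.ext <;> simp <;> ring
      rw [this, Complex.sq_norm, Complex.normSq_mk, abs_of_nonpos hD.le]
      nlinarith
    · rw [Complex.sq_norm, Complex.normSq_mk, abs_of_nonpos hD.le]
      nlinarith
    · simp only
      have := Real.sqrt_nonneg (b^2 - m)
      simp; linarith
    · simp only
      have := Real.sqrt_nonneg (max D 0)
      simp; linarith

lemma estimate (b m E t A B W aR sep ρ Y : ℝ)
    (hb : 0 < b) (ht : 0 < t)
    (hA0 : 0 ≤ A) (hB0 : 0 ≤ B) (hW0 : 0 ≤ W) (haR0 : 0 ≤ aR) (hsep0 : 0 ≤ sep)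
    (hY0 : 0 ≤ Y)
    (k1 : Y ≤ Real.exp (ρ * t) * (A + W * t))
    (k2 : 0 < sep → Y ≤ Real.exp (ρ * t) * (A + 2 * W / sep))
    (hWle : W ≤ B + aR * A)
    (habs1 : aR ^ 2 ≤ (b ^ 2 + sep ^ 2) / 4)
    (hre2E : 2 * ρ ≤ E)
    (hre14 : sep ^ 2 ≤ b ^ 2 / 2 → 2 * ρ ≤ -b / 4)
    (hE1 : -3 * b / 16 ≤ E) :
    Y ^ 2 ≤ 2 * (65 + 64 / b) ^ 2 * Real.exp (E * t) * (A ^ 2 + B ^ 2) := by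
  have hKpos : (0:ℝ) < 65 + 64 / b := by positivity
  suffices hfin : Y ≤ Real.exp (E / 2 * t) * ((65 + 64 / b) * (A + B)) by
    have h2 : Y ^ 2 ≤ (Real.exp (E / 2 * t) * ((65 + 64 / b) * (A + B))) ^ 2 :=
      pow_le_pow_left₀ hY0 hfin 2
    have h3 : (Real.exp (E / 2 * t)) ^ 2 = Real.exp (E * t) := by
      rw [sq, ← Real.exp_add]; ring_nf
    calc Y ^ 2 ≤ (Real.exp (E / 2 * t) * ((65 + 64 / b) * (A + B))) ^ 2 := h2
      _ = Real.exp (E * t) * ((65 + 64 / b) ^ 2 * (A + B) ^ 2) := by rw [mul_pow, h3]; ring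
      _ ≤ Real.exp (E * t) * ((65 + 64 / b) ^ 2 * (2 * (A ^ 2 + B ^ 2))) := by
          apply mul_le_mul_of_nonneg_left _ (Real.exp_nonneg _)
          nlinarith [sq_nonneg (A - B), sq_nonneg (65 + 64 / b)]
      _ = 2 * (65 + 64 / b) ^ 2 * Real.exp (E * t) * (A ^ 2 + B ^ 2) := by ring
  by_cases hc : sep ^ 2 ≤ b ^ 2 / 2
  · -- close roots
    have haR : aR ≤ b := by nlinarith
    have hρ : ρ ≤ E / 2 + -(b / 64) + -(b / 64) := by
      have := hre14 hc
      linarith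
    obtain ⟨u, hu⟩ : ∃ u, Real.exp (-(b / 64) * t) = u := ⟨_, rfl⟩
    have hu0 : 0 ≤ u := hu ▸ Real.exp_nonneg _
    have hx1 : u ≤ 1 := by
      rw [← hu]
      apply Real.exp_le_one_iff.mpr
      nlinarith [ht.le]
    have hx2 : t * u ≤ 64 / b := by
      have h1 : t ≤ 64 / b * Real.exp ((b / 64) * t) := by
        have h := mul_le_mul_of_nonneg_left (Real.add_one_le_exp ((b / 64) * t))
          (by positivity : (0:ℝ) ≤ 64 / b)
        have e : (64 / b) * ((b / 64) * t + 1) = t + 64 / b := by field_simp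
        rw [e] at h
        linarith [le_of_lt (by positivity : (0:ℝ) < 64 / b)]
      have h2 : Real.exp ((b / 64) * t) * u = 1 := by
        rw [← hu, ← Real.exp_add]; ring_nf; exact Real.exp_zero
      calc t * u ≤ (64 / b * Real.exp ((b / 64) * t)) * u :=
            mul_le_mul_of_nonneg_right h1 hu0
        _ = 64 / b * (Real.exp ((b / 64) * t) * u) := by ring
        _ = 64 / b := by rw [h2, mul_one]
    have hexp1 : Real.exp (ρ * t) ≤ Real.exp (E / 2 * t) * u * u := by
      rw [← hu, ← Real.exp_add, ← Real.exp_add]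
      apply Real.exp_le_exp.2
      nlinarith [hρ, ht.le]
    have harith : (u * u) * (A + W * t) ≤ (65 + 64 / b) * (A + B) := by
      have e2 : W * (t * u) ≤ W * (64 / b) := mul_le_mul_of_nonneg_left hx2 hW0
      have c1 : u * u * A ≤ A := by
        nlinarith [mul_nonneg (mul_nonneg hA0 (sub_nonneg.2 hx1)) (by linarith : (0:ℝ) ≤ 1 + u)]
      have hWtu : 0 ≤ W * (t * u) := mul_nonneg hW0 (mul_nonneg ht.le hu0)
      have c3 : (W * (t * u)) * u ≤ W * (64 / b) :=
        calc (W * (t * u)) * u ≤ (W * (t * u)) * 1 := mul_le_mul_of_nonneg_left hx1 hWtu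
          _ = W * (t * u) := mul_one _
          _ ≤ W * (64 / b) := e2
      have c4 : W * (64 / b) ≤ (B + b * A) * (64 / b) := by
        have hWB : W ≤ B + b * A := by nlinarith
        exact mul_le_mul_of_nonneg_right hWB (by positivity)
      have c5 : (B + b * A) * (64 / b) = 64 * A + 64 / b * B := by field_simp; ring
      have c6 : (0:ℝ) ≤ 64 / b * A := by positivity
      calc (u * u) * (A + W * t) = u * u * A + (W * (t * u)) * u := by ring
        _ ≤ A + W * (64 / b) := by linarith
        _ ≤ A + (64 * A + 64 / b * B) := by rw [← c5]; linarith
        _ ≤ (65 + 64 / b) * (A + B) := by nlinarith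
    calc Y ≤ Real.exp (ρ * t) * (A + W * t) := k1
      _ ≤ (Real.exp (E / 2 * t) * u * u) * (A + W * t) :=
          mul_le_mul_of_nonneg_right hexp1 (by positivity)
      _ = Real.exp (E / 2 * t) * ((u * u) * (A + W * t)) := by ring
      _ ≤ Real.exp (E / 2 * t) * ((65 + 64 / b) * (A + B)) :=
          mul_le_mul_of_nonneg_left harith (Real.exp_nonneg _)
  · -- separated roots
    push_neg at hc
    have hseppos : 0 < sep := by nlinarith
    have haRsep : aR ≤ sep := by nlinarith
    have hbsep : b ≤ 2 * sep := by nlinarith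
    have h2W : 2 * W / sep ≤ 2 * A + 4 / b * B := by
      rw [div_le_iff₀ hseppos]
      have e0 : 2 * B ≤ 4 / b * B * sep := by
        rw [div_mul_eq_mul_div, div_mul_eq_mul_div, le_div_iff₀ hb]
        nlinarith [mul_nonneg hB0 (sub_nonneg.2 hbsep)]
      nlinarith [mul_le_mul_of_nonneg_right haRsep hA0]
    have hexp2 : Real.exp (ρ * t) ≤ Real.exp (E / 2 * t) := by
      apply Real.exp_le_exp.2; nlinarith [ht.le]
    have hKA : 3 * A + 4 / b * B ≤ (65 + 64 / b) * (A + B) := by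
      have e1 : (0:ℝ) ≤ 64 / b * A := by positivity
      have e2 : 4 / b * B ≤ 64 / b * B :=
        mul_le_mul_of_nonneg_right ((div_le_div_iff_of_pos_right hb).2 (by norm_num)) hB0
      nlinarith
    calc Y ≤ Real.exp (ρ * t) * (A + 2 * W / sep) := k2 hseppos
      _ ≤ Real.exp (E / 2 * t) * (A + 2 * W / sep) := by
          apply mul_le_mul_of_nonneg_right hexp2
          have h9 : 0 ≤ 2 * W / sep := by positivity
          linarith
      _ ≤ Real.exp (E / 2 * t) * ((65 + 64 / b) * (A + B)) := by
          apply mul_le_mul_of_nonneg_left _ (Real.exp_nonneg _)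
          linarith


/-- Uniform-in-frequency estimate: for any `Λ > 0` and any C² solution `y` of
`y'' + b y' + (Λ + m) y = 0` on `[0,∞)`, one has
`|y(t)|² ≤ C e^{(-b+√(b²-m))t} (|y(0)|² + |y'(0)|²)` with `C = C(b,m)`. -/
theorem stmt_7 (b m : ℝ) (hb : 0 < b) (hm : 0 ≤ m) (hbm : 4 * m < b ^ 2) :
    ∃ C : ℝ, 0 < C ∧ ∀ Λ : ℝ, 0 < Λ →
      ∀ y : ℝ → ℂ, ContDiffOn ℝ 2 y (Set.Ici 0) →
      (∀ t ∈ Set.Ici (0 : ℝ),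
        derivWithin (derivWithin y (Set.Ici 0)) (Set.Ici 0) t
          + (b : ℂ) * derivWithin y (Set.Ici 0) t
          + ((Λ : ℂ) + (m : ℂ)) * y t = 0) →
      ∀ t : ℝ, 0 < t →
        ‖y t‖ ^ 2 ≤
          C * Real.exp ((-b + Real.sqrt (b ^ 2 - m)) * t) *
            (‖y 0‖ ^ 2
              + ‖derivWithin y (Set.Ici 0) 0‖ ^ 2) := by
  refine ⟨2 * (65 + 64 / b) ^ 2, by positivity, ?_⟩
  intro Λ hΛ y hy hODE t ht
  obtain ⟨r₁, r₂, hsum, hprod, hre, hsep2, habs1, hre2E, hre2D⟩ :=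
    rootsAux b m Λ (b ^ 2 - 4 * (Λ + m)) hb hm hΛ hbm rfl
  obtain ⟨k1, k2⟩ := key b m Λ r₁ r₂ hsum hprod hre y hy hODE t ht.le
  have hsqE : 13 * b / 16 ≤ Real.sqrt (b ^ 2 - m) := by
    rw [show (13 * b / 16 : ℝ) = Real.sqrt ((13 * b / 16) ^ 2) from
      (Real.sqrt_sq (by positivity)).symm]
    apply Real.sqrt_le_sqrt
    nlinarith
  have habs1' : ‖r₁‖ ^ 2 ≤ (b ^ 2 + ‖r₂ - r₁‖ ^ 2) / 4 := by
    rw [hsep2]; exact habs1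
  have hre14 : ‖r₂ - r₁‖ ^ 2 ≤ b ^ 2 / 2 → 2 * r₁.re ≤ -b / 4 := by
    intro hc
    rw [hsep2] at hc
    have h1 : max (b ^ 2 - 4 * (Λ + m)) 0 ≤ b ^ 2 / 2 := by
      rcases le_or_gt (b ^ 2 - 4 * (Λ + m)) 0 with h | h
      · rw [max_eq_right h]; positivity
      · rw [max_eq_left h.le]
        exact (le_abs_self _).trans hc
    have h2 : Real.sqrt (max (b ^ 2 - 4 * (Λ + m)) 0) ≤ 3 * b / 4 := by
      rw [show (3 * b / 4 : ℝ) = Real.sqrt ((3 * b / 4) ^ 2) from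
        (Real.sqrt_sq (by positivity)).symm]
      apply Real.sqrt_le_sqrt; nlinarith
    linarith
  have k2' : 0 < ‖r₂ - r₁‖ →
      ‖y t‖ ≤ Real.exp (r₁.re * t) *
        (‖y 0‖ + 2 * ‖derivWithin y (Set.Ici 0) 0 - r₁ * y 0‖
          / ‖r₂ - r₁‖) := by
    intro hs
    apply k2
    intro h0
    rw [h0, sub_self, norm_zero] at hs
    exact lt_irrefl 0 hs
  have hWle : ‖derivWithin y (Set.Ici 0) 0 - r₁ * y 0‖ ≤
      ‖derivWithin y (Set.Ici 0) 0‖ + ‖r₁‖ * ‖y 0‖ := by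
    have h := norm_sub_le (derivWithin y (Set.Ici 0) 0) (r₁ * y 0)
    simpa [norm_mul] using h
  exact estimate b m (-b + Real.sqrt (b ^ 2 - m)) t (‖y 0‖)
    (‖derivWithin y (Set.Ici 0) 0‖)
    (‖derivWithin y (Set.Ici 0) 0 - r₁ * y 0‖)
    (‖r₁‖) (‖r₂ - r₁‖) r₁.re (‖y t‖)
    hb ht (norm_nonneg _) (norm_nonneg _) (norm_nonneg _)
    (norm_nonneg _) (norm_nonneg _) (norm_nonneg _)
    k1 k2' hWle habs1' hre2E hre14 (by linarith)
end

section
/- Let $b>0$ and $m\geq 0$ satisfy $b^2>4m$. Then there exists a constant $C>0$, depending only on $b$ and $m$, such that for every real number $\Lambda>0$, every twice continuously differentiable function $y:[0,\infty)\to\mathbb{C}$ satisfying $y''(t)+b\,y'(t)+(\Lambda+m)\,y(t)=0$ for all $t\geq 0$, and every $t>0$, one has $|y'(t)|^2\leq C\,e^{\left(-b+\sqrt{b^2-m}\right)t}\left((\Lambda+m)|y(0)|^2+|y'(0)|^2\right)$. -/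
open Set

private lemma energy_antitone (b' μ : ℝ) (hb' : 0 ≤ b')
    (z w : ℝ → ℂ) (hzc : ContinuousOn z (Ici 0)) (hwc : ContinuousOn w (Ici 0))
    (hz : ∀ t ∈ Ici (0:ℝ), HasDerivWithinAt z (w t) (Ici 0) t)
    (hw : ∀ t ∈ Ici (0:ℝ), HasDerivWithinAt w (-(b':ℂ) * w t - (μ:ℂ) * z t) (Ici 0) t) :
    AntitoneOn (fun t => μ * ‖z t‖^2 + ‖w t‖^2) (Ici 0) := by
  apply antitoneOn_of_hasDerivWithinAt_nonpos (convex_Ici 0)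
    (f' := fun t => μ * (2 * (inner ℝ (z t) (w t) : ℝ))
      + 2 * (inner ℝ (w t) (-(b':ℂ) * w t - (μ:ℂ) * z t) : ℝ))
  · exact (continuousOn_const.mul ((hzc.norm).pow 2)).add ((hwc.norm).pow 2)
  · intro x hx
    rw [interior_Ici] at hx ⊢
    exact ((((hz x (Ioi_subset_Ici_self hx)).norm_sq).const_mul μ).add
      ((hw x (Ioi_subset_Ici_self hx)).norm_sq)).mono Ioi_subset_Ici_self
  · intro x hx
    rw [interior_Ici] at hx
    have e : -(b':ℂ) * w x - (μ:ℂ) * z x = (-b') • w x - μ • z x := by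
      simp [Complex.real_smul]
    have h1 : (inner ℝ (w x) (-(b':ℂ) * w x - (μ:ℂ) * z x) : ℝ)
        = -(b' * ‖w x‖^2) - μ * (inner ℝ (w x) (z x) : ℝ) := by
      rw [e, inner_sub_right, real_inner_smul_right, real_inner_smul_right,
        real_inner_self_eq_norm_sq]
      ring
    rw [h1, real_inner_comm (w x) (z x)]
    nlinarith [mul_nonneg hb' (sq_nonneg ‖w x‖)]

set_option maxHeartbeats 1000000 in
/-- Uniform-in-frequency estimate for the time derivative: for any `Λ > 0` and any
C² solution `y` of `y'' + b y' + (Λ + m) y = 0` on `[0,∞)`, one has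
`|y'(t)|² ≤ C e^{(-b+√(b²-m))t} ((Λ+m)|y(0)|² + |y'(0)|²)` with `C = C(b,m)`. -/
theorem stmt_8 (b m : ℝ) (hb : 0 < b) (hm : 0 ≤ m) (hbm : 4 * m < b ^ 2) :
    ∃ C : ℝ, 0 < C ∧ ∀ Λ : ℝ, 0 < Λ →
      ∀ y : ℝ → ℂ, ContDiffOn ℝ 2 y (Set.Ici 0) →
      (∀ t ∈ Set.Ici (0 : ℝ),
        derivWithin (derivWithin y (Set.Ici 0)) (Set.Ici 0) t
          + (b : ℂ) * derivWithin y (Set.Ici 0) t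
          + ((Λ : ℂ) + (m : ℂ)) * y t = 0) →
      ∀ t : ℝ, 0 < t →
        ‖derivWithin y (Set.Ici 0) t‖ ^ 2 ≤
          C * Real.exp ((-b + Real.sqrt (b ^ 2 - m)) * t) *
            ((Λ + m) * ‖y 0‖ ^ 2
              + ‖derivWithin y (Set.Ici 0) 0‖ ^ 2) := by
  have hb2m : 0 < b^2 - m := by nlinarith
  set s := Real.sqrt (b^2 - m) with hs
  have hs0 : 0 < s := Real.sqrt_pos.2 hb2m
  have hs2 : s^2 = b^2 - m := Real.sq_sqrt hb2m.le
  have hsb : s ≤ b := by nlinarith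
  set δ := (b - s)/2 with hδ
  have hδ0 : 0 ≤ δ := by rw [hδ]; linarith
  have hsd : s = b - 2*δ := by rw [hδ]; ring
  have hm4 : m = 4*δ*(b-δ) := by rw [hsd] at hs2; linear_combination hs2
  have hm0δ : m = 0 → δ = 0 := by
    intro h
    rw [h] at hm4
    rcases mul_eq_zero.1 hm4.symm with h1 | h1
    · rcases mul_eq_zero.1 h1 with h2 | h2
      · norm_num at h2
      · exact h2
    · nlinarith
  set km := 8*δ^2/(3*m) with hkm
  set kk := 2*δ^2/m with hkk
  have hkm0 : 0 ≤ km := by rw [hkm]; positivity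
  have hkk0 : 0 ≤ kk := by rw [hkk]; positivity
  have hkmle : 2*δ^2 ≤ km * (3*m/4) := by
    rcases eq_or_lt_of_le hm with h | h
    · have hd := hm0δ h.symm
      rw [hd, ← h]
      norm_num
    · rw [hkm, div_mul_eq_mul_div, le_div_iff₀ (by linarith)]
      nlinarith
  have hkkle : 2*δ^2 ≤ kk * m := by
    rcases eq_or_lt_of_le hm with h | h
    · have hd := hm0δ h.symm
      rw [hd, ← h]
      norm_num
    · rw [hkk, div_mul_eq_mul_div, le_div_iff₀ h]
  refine ⟨(2+km)*(2+kk), by nlinarith, ?_⟩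
  intro Λ hΛ y hy hode t ht
  have hU : UniqueDiffOn ℝ (Set.Ici (0:ℝ)) := uniqueDiffOn_Ici 0
  set Y1 := derivWithin y (Set.Ici 0) with hY1
  have hy1 : ContDiffOn ℝ 1 Y1 (Set.Ici 0) := hy.derivWithin hU (by norm_num)
  have hdy : ∀ u ∈ Set.Ici (0:ℝ), HasDerivWithinAt y (Y1 u) (Set.Ici 0) u :=
    fun u hu => ((hy.differentiableOn (by norm_num)) u hu).hasDerivWithinAt
  have hdy1 : ∀ u ∈ Set.Ici (0:ℝ),
      HasDerivWithinAt Y1 (-(b:ℂ) * Y1 u - ((Λ:ℂ)+(m:ℂ)) * y u) (Set.Ici 0) u := by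
    intro u hu
    have h := ((hy1.differentiableOn (by norm_num)) u hu).hasDerivWithinAt
    have he : derivWithin Y1 (Set.Ici 0) u = -(b:ℂ) * Y1 u - ((Λ:ℂ)+(m:ℂ)) * y u := by
      have h2 := hode u hu
      linear_combination h2
    rwa [he] at h
  set w : ℝ → ℂ := fun u => Y1 u + (δ:ℂ) * y u with hwdef
  set z : ℝ → ℂ := fun u => (Real.exp (δ*u) : ℂ) * y u with hzdef
  set wz : ℝ → ℂ := fun u => (Real.exp (δ*u) : ℂ) * w u with hwzdef
  have hexp : ∀ u : ℝ, HasDerivAt (fun v => ((Real.exp (δ*v) : ℝ) : ℂ))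
      (((δ * Real.exp (δ*u) : ℝ)) : ℂ) u := by
    intro u
    have h0 : HasDerivAt (fun v => δ*v) δ u := by
      simpa using (hasDerivAt_id u).const_mul δ
    have h1 : HasDerivAt (fun v => Real.exp (δ*v)) (δ * Real.exp (δ*u)) u := by
      simpa [mul_comm] using h0.exp
    exact h1.ofReal_comp
  have hdz : ∀ u ∈ Set.Ici (0:ℝ), HasDerivWithinAt z (wz u) (Set.Ici 0) u := by
    intro u hu
    have h := (hexp u).hasDerivWithinAt.mul (hdy u hu)
    convert h using 1
    · rfl
    · rfl
    simp only [hwzdef, hwdef]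
    push_cast
    ring
  have hdwz : ∀ u ∈ Set.Ici (0:ℝ),
      HasDerivWithinAt wz (-(s:ℂ) * wz u - (((Λ + 3*m/4 : ℝ)):ℂ) * z u) (Set.Ici 0) u := by
    intro u hu
    have hdw : HasDerivWithinAt w ((-(b:ℂ) * Y1 u - ((Λ:ℂ)+(m:ℂ)) * y u) + (δ:ℂ) * Y1 u)
        (Set.Ici 0) u := (hdy1 u hu).add ((hdy u hu).const_mul ((δ:ℂ)))
    have h := (hexp u).hasDerivWithinAt.mul hdw
    convert h using 1
    · rfl
    · rfl
    simp only [hwzdef, hwdef, hzdef]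
    have hsc : (s:ℂ) = (b:ℂ) - 2*(δ:ℂ) := by
      rw [hsd]; push_cast; ring
    have hmc : (m:ℂ) = 4*(δ:ℂ)*((b:ℂ)-(δ:ℂ)) := by
      rw [hm4]; push_cast; ring
    push_cast
    rw [hsc, hmc]
    ring
  have hzc : ContinuousOn z (Set.Ici 0) := by
    apply ContinuousOn.mul _ hy.continuousOn
    exact (Complex.continuous_ofReal.comp
      (Real.continuous_exp.comp (continuous_const.mul continuous_id))).continuousOn
  have hwc : ContinuousOn w (Set.Ici 0) :=
    hy1.continuousOn.add (continuousOn_const.mul hy.continuousOn)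
  have hwzc : ContinuousOn wz (Set.Ici 0) := by
    apply ContinuousOn.mul _ hwc
    exact (Complex.continuous_ofReal.comp
      (Real.continuous_exp.comp (continuous_const.mul continuous_id))).continuousOn
  have hant := energy_antitone s (Λ + 3*m/4) hs0.le z wz hzc hwzc hdz hdwz
  have hE := hant self_mem_Ici (mem_Ici.2 ht.le) ht.le
  simp only at hE
  have hnorm : ∀ u : ℝ, ‖z u‖ = Real.exp (δ*u) * ‖y u‖ := by
    intro u
    rw [hzdef]
    rw [norm_mul, Complex.norm_real, Real.norm_eq_abs, abs_of_pos (Real.exp_pos _)]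
  have hnormw : ∀ u : ℝ, ‖wz u‖ = Real.exp (δ*u) * ‖w u‖ := by
    intro u
    rw [hwzdef]
    rw [norm_mul, Complex.norm_real, Real.norm_eq_abs, abs_of_pos (Real.exp_pos _)]
  rw [hnorm, hnorm, hnormw, hnormw] at hE
  simp only [mul_zero, Real.exp_zero, one_mul] at hE
  -- hE : (Λ+3m/4) * (exp(δt) * ‖y t‖)^2 + (exp(δt)*‖w t‖)^2 ≤ (Λ+3m/4)*‖y 0‖^2 + ‖w 0‖^2
  set ε := Real.exp (δ*t) with hε
  set a := ‖y t‖ with had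
  set Wt := ‖w t‖ with hWtd
  set Y := ‖Y1 t‖ with hYd
  set a0 := ‖y 0‖ with ha0d
  set W0 := ‖w 0‖ with hW0d
  set Y0 := ‖Y1 0‖ with hY0d
  have hεpos : 0 < ε := Real.exp_pos _
  have hmulnorm : ∀ v : ℂ, ‖(δ:ℂ) * v‖ = δ * ‖v‖ := by
    intro v
    rw [norm_mul, Complex.norm_real, Real.norm_eq_abs, abs_of_nonneg hδ0]
  have hY1t : Y ≤ Wt + δ * a := by
    have heq : Y1 t = w t - (δ:ℂ) * y t := by simp [hwdef]
    rw [hYd, hWtd, had, heq, ← hmulnorm (y t)]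
    exact norm_sub_le _ _
  have hW0 : W0 ≤ Y0 + δ * a0 := by
    have heq : w 0 = Y1 0 + (δ:ℂ) * y 0 := by simp [hwdef]
    rw [hW0d, hY0d, ha0d, heq, ← hmulnorm (y 0)]
    exact norm_add_le _ _
  have hεe : Real.exp ((-b+s)*t) * ε^2 = 1 := by
    rw [hε, sq, ← Real.exp_add, ← Real.exp_add, ← Real.exp_zero]
    congr 1
    rw [hsd]; ring
  have hXpos : 0 < Real.exp ((-b+s)*t) := Real.exp_pos _
  have hann : 0 ≤ a := norm_nonneg _
  have hann0 : 0 ≤ a0 := norm_nonneg _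
  have hWtn : 0 ≤ Wt := norm_nonneg _
  have hYn : 0 ≤ Y := norm_nonneg _
  have hY0n : 0 ≤ Y0 := norm_nonneg _
  have hW0n : 0 ≤ W0 := norm_nonneg _
  clear_value a Wt Y a0 W0 Y0 ε
  clear hode hy hy1 hdy hdy1 hdz hdwz hzc hwc hwzc hant hexp hmulnorm hnorm hnormw hU
  clear had hWtd hYd ha0d hW0d hY0d hε hY1 hwdef hzdef hwzdef
  clear wz z w Y1 y
  clear_value δ s km kk
  clear hδ hs hkm hkk hsd hm4 hm0δ hs2
  -- main chain
  have s1 : Y^2 ≤ 2*Wt^2 + 2*δ^2*a^2 := by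
    nlinarith [mul_self_le_mul_self hYn hY1t, sq_nonneg (Wt - δ*a)]
  have s2 : 2*Wt^2 + 2*δ^2*a^2 ≤ (2+km)*((Λ+3*m/4)*a^2 + Wt^2) := by
    nlinarith [mul_nonneg (mul_nonneg hkm0 hΛ.le) (sq_nonneg a),
      mul_nonneg (by linarith : (0:ℝ) ≤ km*(3*m/4) - 2*δ^2) (sq_nonneg a),
      mul_nonneg hkm0 (sq_nonneg Wt),
      mul_nonneg (by linarith : (0:ℝ) ≤ Λ + 3*m/4) (sq_nonneg a)]
  have s3 : Y^2 * ε^2 ≤ (2+km)*(((Λ+3*m/4)*a^2 + Wt^2)*ε^2) := by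
    nlinarith [mul_le_mul_of_nonneg_right (s1.trans s2) (sq_nonneg ε)]
  have s4 : ((Λ+3*m/4)*a^2 + Wt^2)*ε^2 ≤ (Λ+3*m/4)*a0^2 + W0^2 := by nlinarith [hE]
  have w0sq : W0^2 ≤ 2*Y0^2 + 2*δ^2*a0^2 := by
    nlinarith [mul_self_le_mul_self hW0n hW0, sq_nonneg (Y0 - δ*a0)]
  have s5 : (Λ+3*m/4)*a0^2 + W0^2 ≤ (2+kk)*((Λ+m)*a0^2 + Y0^2) := by
    nlinarith [w0sq, mul_nonneg (mul_nonneg hkk0 hΛ.le) (sq_nonneg a0),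
      mul_nonneg (by linarith : (0:ℝ) ≤ kk*m - 2*δ^2) (sq_nonneg a0),
      mul_nonneg hkk0 (sq_nonneg Y0),
      mul_nonneg hΛ.le (sq_nonneg a0),
      mul_nonneg hm (sq_nonneg a0)]
  have key : Y^2 * ε^2 ≤ (2+km)*((2+kk)*((Λ+m)*a0^2 + Y0^2)) :=
    s3.trans (mul_le_mul_of_nonneg_left (s4.trans s5) (by linarith))
  -- finish
  calc Y^2 = Real.exp ((-b+s)*t) * (Y^2 * ε^2) := by
        rw [show Real.exp ((-b+s)*t) * (Y^2 * ε^2)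
            = Y^2 * (Real.exp ((-b+s)*t) * ε^2) from by ring, hεe, mul_one]
  _ ≤ Real.exp ((-b+s)*t) * ((2+km)*((2+kk)*((Λ+m)*a0^2 + Y0^2))) :=
        mul_le_mul_of_nonneg_left key hXpos.le
  _ = (2+km)*(2+kk) * Real.exp ((-b+s)*t) * ((Λ+m)*a0^2 + Y0^2) := by ring
end

section
/- Let $b>0$ and $m\geq 0$ satisfy $b^2>4m$. Then there exists a constant $C>0$, depending only on $b$ and $m$, such that for every real number $\Lambda>0$, every twice continuously differentiable function $y:[0,\infty)\to\mathbb{C}$ satisfying $y''(t)+b\,y'(t)+(\Lambda+m)\,y(t)=0$ for all $t\geq 0$, and every $t>0$, one has $\Lambda\,|y(t)|^2\leq C\,e^{\left(-b+\sqrt{b^2-4m}\right)t}\left(\Lambda\,|y(0)|^2+|y'(0)|^2\right)$. -/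
open Set Complex

private lemma const_on_Ici {f : ℝ → ℂ}
    (hf : ∀ u ∈ Ici (0:ℝ), HasDerivWithinAt f 0 (Ici 0) u) {t : ℝ} (ht : 0 ≤ t) :
    f t = f 0 := by
  have hdiff : DifferentiableOn ℝ f (Ici 0) := fun x hx => (hf x hx).differentiableWithinAt
  refine (convex_Ici (0:ℝ)).is_const_of_fderivWithin_eq_zero hdiff (fun x hx => ?_)
    (mem_Ici.mpr ht) self_mem_Ici
  have h := (hf x hx).hasFDerivWithinAt.fderivWithin ((uniqueDiffOn_Ici 0) x hx)
  rw [h]; ext; simp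

private lemma rep_lemma (b m Λ : ℝ) (r₁ r₂ : ℂ)
    (hsum : r₁ + r₂ = -(b:ℂ)) (hprod : r₁ * r₂ = (Λ:ℂ) + (m:ℂ))
    (y : ℝ → ℂ) (hy : ContDiffOn ℝ 2 y (Set.Ici 0))
    (hode : ∀ u ∈ Set.Ici (0:ℝ),
        derivWithin (derivWithin y (Set.Ici 0)) (Set.Ici 0) u
          + (b : ℂ) * derivWithin y (Set.Ici 0) u
          + ((Λ : ℂ) + (m : ℂ)) * y u = 0)
    (χ : ℝ → ℂ) (hχ0 : χ 0 = 0)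
    (hχ : ∀ u : ℝ, HasDerivAt χ (Complex.exp ((r₁ - r₂) * u)) u)
    {t : ℝ} (ht : 0 ≤ t) :
    y t = Complex.exp (r₂ * t) * (y 0 + χ t * (derivWithin y (Set.Ici 0) 0 - r₂ * y 0)) := by
  set y' := derivWithin y (Set.Ici 0) with hy'def
  have hyd : DifferentiableOn ℝ y (Ici 0) := hy.differentiableOn two_ne_zero
  have hy'd : DifferentiableOn ℝ y' (Ici 0) :=
    (hy.derivWithin (uniqueDiffOn_Ici 0) (m := 1) (by norm_num)).differentiableOn one_ne_zero
  have Hy : ∀ u ∈ Ici (0:ℝ), HasDerivWithinAt y (y' u) (Ici 0) u :=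
    fun u hu => (hyd u hu).hasDerivWithinAt
  have Hy' : ∀ u ∈ Ici (0:ℝ), HasDerivWithinAt y' (derivWithin y' (Ici 0) u) (Ici 0) u :=
    fun u hu => (hy'd u hu).hasDerivWithinAt
  have hexp : ∀ (c : ℂ) (u : ℝ),
      HasDerivAt (fun v : ℝ => Complex.exp (c * v)) (c * Complex.exp (c * u)) u := by
    intro c u
    have h1 : HasDerivAt (fun v : ℝ => c * (v:ℂ)) c u := by
      simpa using ((hasDerivAt_id u).ofReal_comp).const_mul c
    simpa [mul_comm] using h1.cexp
  -- Step 1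
  have hstep1 : ∀ u ∈ Ici (0:ℝ),
      y' u - r₂ * y u = Complex.exp (r₁ * u) * (y' 0 - r₂ * y 0) := by
    have hg : ∀ u ∈ Ici (0:ℝ),
        HasDerivWithinAt (fun v : ℝ => Complex.exp (-r₁ * v) * (y' v - r₂ * y v)) 0 (Ici 0) u := by
      intro u hu
      have hzd : HasDerivWithinAt (fun v : ℝ => y' v - r₂ * y v)
          (derivWithin y' (Ici 0) u - r₂ * y' u) (Ici 0) u :=
        (Hy' u hu).sub ((Hy u hu).const_mul r₂)
      have h := ((hexp (-r₁) u).hasDerivWithinAt).mul hzd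
      refine h.congr_deriv ?_
      symm
      have h0 := hode u hu
      linear_combination (-(Complex.exp (-r₁ * u))) * h0
        + (Complex.exp (-r₁ * u) * y' u) * hsum - (Complex.exp (-r₁ * u) * y u) * hprod
    intro u hu
    have hc := const_on_Ici hg (mem_Ici.mp hu)
    have key : Complex.exp (-r₁ * u) * (y' u - r₂ * y u) = y' 0 - r₂ * y 0 := by
      simpa using hc
    have e1 : Complex.exp (r₁ * u) * Complex.exp (-r₁ * u) = 1 := by
      rw [← Complex.exp_add, show r₁*(u:ℂ) + -r₁*(u:ℂ) = 0 by ring, Complex.exp_zero]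
    linear_combination Complex.exp (r₁ * (u:ℂ)) * key - (y' u - r₂ * y u) * e1
  -- Step 2
  have hh : ∀ u ∈ Ici (0:ℝ),
      HasDerivWithinAt (fun v : ℝ => Complex.exp (-r₂ * v) * y v
        - χ v * (y' 0 - r₂ * y 0)) 0 (Ici 0) u := by
    intro u hu
    have h := (((hexp (-r₂) u).hasDerivWithinAt).mul (Hy u hu)).sub
      (((hχ u).hasDerivWithinAt).mul_const (y' 0 - r₂ * y 0))
    refine h.congr_deriv ?_
    symm
    have hs1 := hstep1 u hu
    have e2 : Complex.exp (-r₂ * u) * Complex.exp (r₁ * u)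
        = Complex.exp ((r₁ - r₂) * u) := by
      rw [← Complex.exp_add]; congr 1; ring
    linear_combination (-(Complex.exp (-r₂ * u))) * hs1 - (y' 0 - r₂ * y 0) * e2
  have hc := const_on_Ici hh ht
  have key : Complex.exp (-r₂ * t) * y t - χ t * (y' 0 - r₂ * y 0) = y 0 := by
    simpa [hχ0] using hc
  have e1 : Complex.exp (r₂ * t) * Complex.exp (-r₂ * t) = 1 := by
    rw [← Complex.exp_add, show r₂*(t:ℂ) + -r₂*(t:ℂ) = 0 by ring, Complex.exp_zero]
  linear_combination Complex.exp (r₂ * (t:ℂ)) * key - y t * e1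

private lemma combine {Λ t E M : ℝ} (hΛ : 0 < Λ) (hE : 0 < E) (hM : 0 ≤ M)
    {r₂ χt y0 y1 yt : ℂ}
    (hrep : yt = Complex.exp (r₂ * t) * (y0 + χt * (y1 - r₂ * y0)))
    (h1 : ‖Complex.exp (r₂ * t)‖ ≤ E)
    (h2 : Real.sqrt Λ * (‖Complex.exp (r₂ * t)‖ * ‖χt‖) ≤ M * E)
    (h3 : ‖r₂‖ * (‖Complex.exp (r₂ * t)‖ * ‖χt‖) ≤ M * E) :
    Λ * ‖yt‖ ^ 2 ≤ 2*(1+M)^2 * E^2 * (Λ * ‖y0‖ ^ 2 + ‖y1‖ ^ 2) := by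
  set L := Real.sqrt Λ with hLdef
  have hL2 : L^2 = Λ := Real.sq_sqrt hΛ.le
  have hL0 : 0 < L := Real.sqrt_pos.mpr hΛ
  set X := ‖Complex.exp (r₂ * t)‖ with hX
  set K := ‖χt‖ with hK
  set a := ‖y0‖ with ha
  set c := ‖y1‖ with hc
  set R := ‖r₂‖ with hR
  have a0 : 0 ≤ a := norm_nonneg _
  have c0 : 0 ≤ c := norm_nonneg _
  have K0 : 0 ≤ K := norm_nonneg _
  have X0 : 0 ≤ X := norm_nonneg _
  have R0 : 0 ≤ R := norm_nonneg _
  have habs : ‖yt‖ ≤ X * (a + K * (c + R * a)) := by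
    rw [hrep, norm_mul]
    refine mul_le_mul_of_nonneg_left ?_ X0
    calc ‖y0 + χt * (y1 - r₂ * y0)‖
        ≤ a + ‖χt * (y1 - r₂ * y0)‖ := norm_add_le _ _
      _ = a + K * ‖y1 - r₂ * y0‖ := by rw [norm_mul]
      _ ≤ a + K * (c + R * a) := by
          have t1 : ‖y1 - r₂ * y0‖ ≤ c + R * a := by
            calc ‖y1 - r₂ * y0‖ ≤ ‖y1‖ + ‖r₂ * y0‖ :=
                  by simpa [sub_eq_add_neg] using norm_add_le y1 (-(r₂ * y0))
              _ = c + R * a := by rw [norm_mul]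
          nlinarith
  have yt0 : 0 ≤ ‖yt‖ := norm_nonneg _
  have step : L * ‖yt‖ ≤ E * ((1+M) * (L*a) + M*c) := by
    nlinarith [mul_le_mul_of_nonneg_left habs hL0.le,
      mul_le_mul_of_nonneg_right h1 (mul_nonneg hL0.le a0),
      mul_le_mul_of_nonneg_right h2 c0,
      mul_le_mul_of_nonneg_right h3 (mul_nonneg hL0.le a0)]
  have sq1 : (L * ‖yt‖)^2 ≤ (E * ((1+M) * (L*a) + M*c))^2 := by
    have hnn : 0 ≤ L * ‖yt‖ := mul_nonneg hL0.le yt0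
    exact pow_le_pow_left₀ hnn step 2
  have sq2 : (E * ((1+M) * (L*a) + M*c))^2 ≤ 2*(1+M)^2 * E^2 * ((L*a)^2 + c^2) := by
    nlinarith [sq_nonneg (E*((1+M)*(L*a) - M*c)), sq_nonneg (E*c),
      mul_nonneg (mul_nonneg hM (sq_nonneg E)) (sq_nonneg c)]
  calc Λ * ‖yt‖ ^ 2 = (L * ‖yt‖)^2 := by rw [mul_pow, hL2]
    _ ≤ 2*(1+M)^2 * E^2 * ((L*a)^2 + c^2) := le_trans sq1 sq2
    _ = 2*(1+M)^2 * E^2 * (Λ * a^2 + c^2) := by rw [mul_pow, hL2]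

private lemma texp_neg_le {c t : ℝ} (hc : 0 < c) (ht : 0 ≤ t) :
    t * Real.exp (-(c*t)) ≤ 1/c := by
  rw [le_div_iff₀ hc]
  have h2 : Real.exp (-(c*t)) * Real.exp (c*t) = 1 := by rw [← Real.exp_add]; simp
  have h3 : (0:ℝ) < Real.exp (-(c*t)) := Real.exp_pos _
  have h4 := Real.add_one_le_exp (c*t)
  nlinarith [mul_le_mul_of_nonneg_right (show c*t ≤ Real.exp (c*t) by linarith) h3.le]

private lemma exp_sub_one_le' {x : ℝ} : Real.exp x - 1 ≤ x * Real.exp x := by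
  have h := Real.add_one_le_exp (-x)
  have h2 : Real.exp (-x) * Real.exp x = 1 := by rw [← Real.exp_add]; simp
  nlinarith [mul_le_mul_of_nonneg_right h (Real.exp_pos x).le]

private lemma caseA_scalar {b s ω t F : ℝ} (hb : 0 < b) (hs : 0 < s) (hsb : s ≤ b)
    (hω : 0 < ω) (hωs : ω ≤ s) (ht : 0 ≤ t) (hF : 0 ≤ F) (hFb : F ≤ b) :
    F * (Real.exp ((-b-ω)/2*t) * ((Real.exp (ω*t)-1)/ω))
      ≤ (2+4*b/s) * Real.exp ((-b+s)/2*t) := by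
  set E := Real.exp ((-b+s)/2*t) with hE
  have hEpos : (0:ℝ) < E := Real.exp_pos _
  have hQ1 : (1:ℝ) ≤ Real.exp (ω*t) := Real.one_le_exp (by positivity)
  have hPQ : Real.exp ((-b-ω)/2*t) * Real.exp (ω*t) = Real.exp ((-b+ω)/2*t) := by
    rw [← Real.exp_add]; congr 1; ring
  have hWE : Real.exp ((-b+ω)/2*t) ≤ E := Real.exp_le_exp.mpr (by nlinarith)
  rcases le_or_gt (s/2) ω with hcase | hcase
  · calc F * (Real.exp ((-b-ω)/2*t) * ((Real.exp (ω*t)-1)/ω))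
        ≤ b * (Real.exp ((-b-ω)/2*t) * (Real.exp (ω*t)/ω)) := by
          gcongr
          · linarith
      _ = (b/ω) * (Real.exp ((-b-ω)/2*t) * Real.exp (ω*t)) := by ring
      _ = (b/ω) * Real.exp ((-b+ω)/2*t) := by rw [hPQ]
      _ ≤ (2*b/s) * E := by
          have hbo : b/ω ≤ 2*b/s := by
            rw [div_le_div_iff₀ hω hs]; nlinarith
          nlinarith [mul_le_mul hbo hWE (Real.exp_pos _).le (by positivity)]
      _ ≤ (2+4*b/s) * E := by
          have h0 : (0:ℝ) ≤ b/s := by positivity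
          have e1 : 2*b/s*E = 2*(b/s)*E := by ring
          have e2 : (2+4*b/s)*E = 2*E + 4*((b/s)*E) := by ring
          nlinarith [mul_nonneg h0 hEpos.le]
  · have k1 : (Real.exp (ω*t)-1)/ω ≤ t * Real.exp (ω*t) := by
      rw [div_le_iff₀ hω]
      nlinarith [exp_sub_one_le' (x := ω*t)]
    have hsplit : Real.exp ((-b+ω)/2*t) = E * Real.exp (-(s/4*t)) * Real.exp ((ω-s)/2*t + s/4*t) := by
      rw [← Real.exp_add, ← Real.exp_add]; congr 1; ring
    have hlast : Real.exp ((ω-s)/2*t + s/4*t) ≤ 1 := Real.exp_le_one_iff.mpr (by nlinarith)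
    have h14 := texp_neg_le (show (0:ℝ) < s/4 by linarith) ht
    have h14' : (1:ℝ)/(s/4) = 4/s := by field_simp
    calc F * (Real.exp ((-b-ω)/2*t) * ((Real.exp (ω*t)-1)/ω))
        ≤ b * (Real.exp ((-b-ω)/2*t) * (t * Real.exp (ω*t))) := by
          gcongr
          all_goals first
            | exact mul_nonneg (Real.exp_pos _).le (div_nonneg (by linarith) hω.le)
            | exact k1
      _ = (b*t) * (Real.exp ((-b-ω)/2*t) * Real.exp (ω*t)) := by ring
      _ = (b*t) * (E * Real.exp (-(s/4*t)) * Real.exp ((ω-s)/2*t + s/4*t)) := by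
          rw [hPQ, hsplit]
      _ ≤ (b*t) * (E * Real.exp (-(s/4*t)) * 1) := by
          have hbt : (0:ℝ) ≤ b*t := by positivity
          have he : (0:ℝ) ≤ E * Real.exp (-(s/4*t)) := by positivity
          nlinarith [mul_le_mul_of_nonneg_left hlast (mul_nonneg hbt he)]
      _ = b * (t * Real.exp (-(s/4*t))) * E := by ring
      _ ≤ b * (4/s) * E := by
          have := h14' ▸ h14
          nlinarith [mul_le_mul_of_nonneg_left this hb.le]
      _ ≤ (2+4*b/s) * E := by
          have h0 : (0:ℝ) ≤ b/s := by positivity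
          have e1 : b*(4/s)*E = 4*((b/s)*E) := by ring
          have e2 : (2+4*b/s)*E = 2*E + 4*((b/s)*E) := by ring
          nlinarith [mul_nonneg h0 hEpos.le]
private lemma caseB_scalar {b s t F : ℝ} (hb : 0 < b) (hs : 0 < s) (hsb : s ≤ b)
    (ht : 0 ≤ t) (hF : 0 ≤ F) (hFb : F ≤ b) :
    F * (Real.exp (-(b/2)*t) * t) ≤ (2+4*b/s) * Real.exp ((-b+s)/2*t) := by
  set E := Real.exp ((-b+s)/2*t) with hE
  have hEpos : (0:ℝ) < E := Real.exp_pos _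
  have hsplit : Real.exp (-(b/2)*t) = E * Real.exp (-(s/2*t)) := by
    rw [← Real.exp_add]; congr 1; ring
  have h2 := texp_neg_le (show (0:ℝ) < s/2 by linarith) ht
  have h2' : t * Real.exp (-(s/2*t)) ≤ 2/s := by
    have : (1:ℝ)/(s/2) = 2/s := by field_simp
    linarith [this ▸ h2]
  calc F * (Real.exp (-(b/2)*t) * t) = F * (t * Real.exp (-(s/2*t))) * E := by
        rw [hsplit]; ring
    _ ≤ b * (2/s) * E := by
        have hb1 : F * (t * Real.exp (-(s/2*t))) ≤ b * (2/s) := by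
          have h3 : 0 ≤ t * Real.exp (-(s/2*t)) := by positivity
          nlinarith [mul_le_mul_of_nonneg_left h2' hb.le]
        exact mul_le_mul_of_nonneg_right hb1 hEpos.le
    _ ≤ (2+4*b/s) * E := by
        have h0 : (0:ℝ) ≤ b/s := by positivity
        have e1 : b*(2/s)*E = 2*((b/s)*E) := by ring
        have e2 : (2+4*b/s)*E = 2*E + 4*((b/s)*E) := by ring
        nlinarith [mul_nonneg h0 hEpos.le]

private lemma caseC_scalar {b s ν t F K : ℝ} (hb : 0 < b) (hs : 0 < s) (hsb : s ≤ b)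
    (hν : 0 < ν) (ht : 0 ≤ t) (hK0 : 0 ≤ K) (hKt : K ≤ 2*t) (hKν : K ≤ 2/ν)
    (hF : 0 ≤ F) (hFν : F ≤ (b+ν)/2) :
    F * (Real.exp (-(b/2)*t) * K) ≤ (2+4*b/s) * Real.exp ((-b+s)/2*t) := by
  set E := Real.exp ((-b+s)/2*t) with hE
  have hEpos : (0:ℝ) < E := Real.exp_pos _
  have hKν' : ν * K ≤ 2 := by
    have := (le_div_iff₀ hν).mp hKν
    linarith [mul_comm K ν ▸ this]
  have hFK : F * K ≤ b*t + 1 := by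
    nlinarith [mul_le_mul_of_nonneg_right hFν hK0, mul_le_mul_of_nonneg_left hKt hb.le]
  have hsplit : Real.exp (-(b/2)*t) = E * Real.exp (-(s/2*t)) := by
    rw [← Real.exp_add]; congr 1; ring
  have h1 : Real.exp (-(s/2*t)) ≤ 1 := Real.exp_le_one_iff.mpr (by nlinarith)
  have h2 : t * Real.exp (-(s/2*t)) ≤ 2/s := by
    have h2a := texp_neg_le (show (0:ℝ) < s/2 by linarith) ht
    have : (1:ℝ)/(s/2) = 2/s := by field_simp
    linarith [this ▸ h2a]
  calc F * (Real.exp (-(b/2)*t) * K) = (F*K) * (E * Real.exp (-(s/2*t))) := by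
        rw [hsplit]; ring
    _ ≤ (b*t + 1) * (E * Real.exp (-(s/2*t))) := by
        have : (0:ℝ) ≤ E * Real.exp (-(s/2*t)) := by positivity
        exact mul_le_mul_of_nonneg_right hFK this
    _ = E * Real.exp (-(s/2*t)) + b * (t * Real.exp (-(s/2*t))) * E := by ring
    _ ≤ E * 1 + b * (2/s) * E := by
        have g1 : E * Real.exp (-(s/2*t)) ≤ E * 1 := by
          exact mul_le_mul_of_nonneg_left h1 hEpos.le
        have g2 : b * (t * Real.exp (-(s/2*t))) * E ≤ b * (2/s) * E := by
          have := mul_le_mul_of_nonneg_left h2 hb.le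
          exact mul_le_mul_of_nonneg_right this hEpos.le
        linarith
    _ ≤ (2+4*b/s) * E := by
        have h0 : (0:ℝ) ≤ b/s := by positivity
        have e1 : E*1 + b*(2/s)*E = E + 2*((b/s)*E) := by ring
        have e2 : (2+4*b/s)*E = 2*E + 4*((b/s)*E) := by ring
        nlinarith [mul_nonneg h0 hEpos.le]

set_option maxHeartbeats 1000000 in
/-- Uniform-in-frequency estimate for the homogeneous-Sobolev-weighted quantity: for any
`Λ > 0` and any C² solution `y` of `y'' + b y' + (Λ + m) y = 0` on `[0,∞)`, one has
`Λ|y(t)|² ≤ C e^{(-b+√(b²-4m))t} (Λ|y(0)|² + |y'(0)|²)` with `C = C(b,m)`. -/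
theorem stmt_9 (b m : ℝ) (hb : 0 < b) (hm : 0 ≤ m) (hbm : 4 * m < b ^ 2) :
    ∃ C : ℝ, 0 < C ∧ ∀ Λ : ℝ, 0 < Λ →
      ∀ y : ℝ → ℂ, ContDiffOn ℝ 2 y (Set.Ici 0) →
      (∀ t ∈ Set.Ici (0 : ℝ),
        derivWithin (derivWithin y (Set.Ici 0)) (Set.Ici 0) t
          + (b : ℂ) * derivWithin y (Set.Ici 0) t
          + ((Λ : ℂ) + (m : ℂ)) * y t = 0) →
      ∀ t : ℝ, 0 < t →
        Λ * ‖y t‖ ^ 2 ≤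
          C * Real.exp ((-b + Real.sqrt (b ^ 2 - 4 * m)) * t) *
            (Λ * ‖y 0‖ ^ 2
              + ‖derivWithin y (Set.Ici 0) 0‖ ^ 2) := by
  have hb2m : (0:ℝ) < b^2 - 4*m := by linarith
  set s := Real.sqrt (b^2 - 4*m) with hsdef
  have hs2 : s^2 = b^2 - 4*m := Real.sq_sqrt hb2m.le
  have hspos : 0 < s := Real.sqrt_pos.mpr hb2m
  clear_value s
  have hsb : s ≤ b := by nlinarith
  set M : ℝ := 2 + 4*b/s with hMdef
  clear_value M
  have hbs0 : (0:ℝ) ≤ b/s := by positivity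
  have hM0 : (0:ℝ) ≤ M := by
    have e : M = 2 + 4*(b/s) := by rw [hMdef]; ring
    linarith
  have hM0' : (0:ℝ) < 1 + M := by linarith
  refine ⟨2*(1+M)^2, by positivity, ?_⟩
  intro Λ hΛ y hy hode t ht
  set E := Real.exp ((-b+s)/2*t) with hEdef
  have hEpos : (0:ℝ) < E := Real.exp_pos _
  have hE2 : E^2 = Real.exp ((-b+s)*t) := by
    rw [hEdef, sq, ← Real.exp_add]; congr 1; ring
  clear_value E
  rw [← hE2]
  have hLnn : (0:ℝ) ≤ Real.sqrt Λ := Real.sqrt_nonneg _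
  rcases lt_trichotomy (4*(Λ+m)) (b^2) with hc | hc | hc
  · -- real distinct roots
    set ω := Real.sqrt (b^2 - 4*(Λ+m)) with hωdef
    have hω2 : ω^2 = b^2 - 4*(Λ+m) := Real.sq_sqrt (by linarith)
    have hωpos : 0 < ω := Real.sqrt_pos.mpr (by linarith)
    clear_value ω
    have hωs : ω ≤ s := by nlinarith
    set r₁ : ℂ := (((-b+ω)/2 : ℝ) : ℂ) with hr1
    set r₂ : ℂ := (((-b-ω)/2 : ℝ) : ℂ) with hr2
    clear_value r₁ r₂
    have hsum : r₁ + r₂ = -(b:ℂ) := by rw [hr1, hr2]; push_cast; ring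
    have hω2' : ((ω:ℂ))^2 = (b:ℂ)^2 - 4*((Λ:ℂ)+(m:ℂ)) := by exact_mod_cast hω2
    have hprod : r₁ * r₂ = (Λ:ℂ) + (m:ℂ) := by
      rw [hr1, hr2]; push_cast; linear_combination (-(1:ℂ)/4) * hω2'
    have hχ : ∀ u : ℝ, HasDerivAt (fun v : ℝ => (((Real.exp (ω*v) - 1)/ω : ℝ) : ℂ))
        (Complex.exp ((r₁ - r₂) * u)) u := by
      intro u
      have hreal : HasDerivAt (fun v : ℝ => (Real.exp (ω*v) - 1)/ω) (Real.exp (ω*u)) u := by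
        have h1 : HasDerivAt (fun v : ℝ => ω*v) ω u := by
          simpa using (hasDerivAt_id u).const_mul ω
        have h2 := (h1.exp.sub_const 1).div_const ω
        rw [mul_div_cancel_right₀ _ hωpos.ne'] at h2
        exact h2
      have h3 := hreal.ofReal_comp
      have hdiff : (r₁ - r₂) * (u:ℂ) = ((ω*u : ℝ) : ℂ) := by rw [hr1, hr2]; push_cast; ring
      rw [hdiff, ← Complex.ofReal_exp]
      exact h3
    have hχ0 : (((Real.exp (ω*(0:ℝ)) - 1)/ω : ℝ) : ℂ) = 0 := by norm_num
    have hrep := rep_lemma b m Λ r₁ r₂ hsum hprod y hy hode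
      (fun v : ℝ => (((Real.exp (ω*v) - 1)/ω : ℝ) : ℂ)) hχ0 hχ ht.le
    beta_reduce at hrep
    have hXval : ‖Complex.exp (r₂ * t)‖ = Real.exp ((-b-ω)/2*t) := by
      rw [show r₂ * (t:ℂ) = (((-b-ω)/2*t : ℝ) : ℂ) by rw [hr2]; push_cast; ring,
        Complex.norm_exp, Complex.ofReal_re]
    have hKval : ‖(((Real.exp (ω*t) - 1)/ω : ℝ) : ℂ)‖ = (Real.exp (ω*t)-1)/ω := by
      rw [Complex.norm_real, Real.norm_eq_abs, _root_.abs_of_nonneg]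
      exact div_nonneg (by linarith [Real.one_le_exp (show (0:ℝ) ≤ ω*t by positivity)]) hωpos.le
    have hRval : ‖r₂‖ = (b+ω)/2 := by
      rw [hr2, Complex.norm_real, Real.norm_eq_abs, _root_.abs_of_nonpos (by nlinarith)]; ring
    have hLs : Real.sqrt Λ ≤ s/2 := by
      have hΛle : Λ ≤ (s/2)^2 := by nlinarith
      calc Real.sqrt Λ ≤ Real.sqrt ((s/2)^2) := Real.sqrt_le_sqrt hΛle
        _ = s/2 := Real.sqrt_sq (by positivity)
    refine combine hΛ hEpos hM0 hrep ?_ ?_ ?_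
    · rw [hXval, hEdef]
      exact Real.exp_le_exp.mpr (by nlinarith)
    · rw [hXval, hKval, hMdef, hEdef]
      exact caseA_scalar hb hspos hsb hωpos hωs ht.le hLnn (by linarith)
    · rw [hXval, hKval, hRval, hMdef, hEdef]
      exact caseA_scalar hb hspos hsb hωpos hωs ht.le (by positivity) (by nlinarith)
  · -- double root
    set r : ℂ := ((-b/2 : ℝ) : ℂ) with hr
    clear_value r
    have hsum : r + r = -(b:ℂ) := by rw [hr]; push_cast; ring
    have hc' : (b:ℂ)^2 = 4*((Λ:ℂ)+(m:ℂ)) := by exact_mod_cast hc.symm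
    have hprod : r * r = (Λ:ℂ) + (m:ℂ) := by
      rw [hr]; push_cast; linear_combination (1/4 : ℂ) * hc'
    have hχ : ∀ u : ℝ, HasDerivAt (fun v : ℝ => ((v : ℝ) : ℂ))
        (Complex.exp ((r - r) * u)) u := by
      intro u
      rw [sub_self, zero_mul, Complex.exp_zero]
      simpa using (hasDerivAt_id u).ofReal_comp
    have hχ0 : (((0:ℝ)) : ℂ) = 0 := by norm_num
    have hrep := rep_lemma b m Λ r r hsum hprod y hy hode
      (fun v : ℝ => ((v : ℝ) : ℂ)) hχ0 hχ ht.le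
    beta_reduce at hrep
    have hXval : ‖Complex.exp (r * t)‖ = Real.exp (-(b/2)*t) := by
      rw [show r * (t:ℂ) = ((-(b/2)*t : ℝ) : ℂ) by rw [hr]; push_cast; ring,
        Complex.norm_exp, Complex.ofReal_re]
    have hKval : ‖((t : ℝ) : ℂ)‖ = t := by
      rw [Complex.norm_real, Real.norm_eq_abs, _root_.abs_of_nonneg ht.le]
    have hRval : ‖r‖ = b/2 := by
      rw [hr, Complex.norm_real, Real.norm_eq_abs, _root_.abs_of_nonpos (by nlinarith)]; ring
    have hLs : Real.sqrt Λ ≤ s/2 := by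
      have hΛle : Λ ≤ (s/2)^2 := by nlinarith
      calc Real.sqrt Λ ≤ Real.sqrt ((s/2)^2) := Real.sqrt_le_sqrt hΛle
        _ = s/2 := Real.sqrt_sq (by positivity)
    refine combine hΛ hEpos hM0 hrep ?_ ?_ ?_
    · rw [hXval, hEdef]
      exact Real.exp_le_exp.mpr (by nlinarith)
    · rw [hXval, hKval, hMdef, hEdef]
      exact caseB_scalar hb hspos hsb ht.le hLnn (by linarith)
    · rw [hXval, hKval, hRval, hMdef, hEdef]
      exact caseB_scalar hb hspos hsb ht.le (by positivity) (by nlinarith)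
  · -- oscillatory
    set ν := Real.sqrt (4*(Λ+m) - b^2) with hνdef
    have hν2 : ν^2 = 4*(Λ+m) - b^2 := Real.sq_sqrt (by linarith)
    have hνpos : 0 < ν := Real.sqrt_pos.mpr (by linarith)
    clear_value ν
    set r₁ : ℂ := ((-b/2 : ℝ) : ℂ) + ((ν/2 : ℝ) : ℂ)*I with hr1
    set r₂ : ℂ := ((-b/2 : ℝ) : ℂ) - ((ν/2 : ℝ) : ℂ)*I with hr2
    clear_value r₁ r₂
    have hsum : r₁ + r₂ = -(b:ℂ) := by rw [hr1, hr2]; push_cast; ring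
    have hν2' : ((ν:ℂ))^2 = 4*((Λ:ℂ)+(m:ℂ)) - (b:ℂ)^2 := by exact_mod_cast hν2
    have hprod : r₁ * r₂ = (Λ:ℂ) + (m:ℂ) := by
      rw [hr1, hr2]; push_cast
      linear_combination (-((ν:ℂ)^2)/4) * Complex.I_sq + (1/4 : ℂ) * hν2'
    have hδ : r₁ - r₂ = (ν:ℂ)*I := by rw [hr1, hr2]; push_cast; ring
    have hν0 : ((ν:ℂ)*I) ≠ 0 :=
      mul_ne_zero (Complex.ofReal_ne_zero.mpr hνpos.ne') Complex.I_ne_zero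
    have hχ : ∀ u : ℝ, HasDerivAt
        (fun v : ℝ => (Complex.exp (((ν:ℂ)*I)*v) - 1)/((ν:ℂ)*I))
        (Complex.exp ((r₁ - r₂) * u)) u := by
      intro u
      have h1 : HasDerivAt (fun v : ℝ => ((ν:ℂ)*I)*(v:ℂ)) ((ν:ℂ)*I) u := by
        simpa using ((hasDerivAt_id u).ofReal_comp).const_mul ((ν:ℂ)*I)
      have h2 := (h1.cexp.sub_const 1).div_const ((ν:ℂ)*I)
      rw [hδ]
      rw [mul_div_cancel_right₀ _ hν0] at h2
      exact h2
    have hχ0 : (Complex.exp (((ν:ℂ)*I)*((0:ℝ):ℂ)) - 1)/((ν:ℂ)*I) = 0 := by simp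
    have hrep := rep_lemma b m Λ r₁ r₂ hsum hprod y hy hode
      (fun v : ℝ => (Complex.exp (((ν:ℂ)*I)*v) - 1)/((ν:ℂ)*I)) hχ0 hχ ht.le
    beta_reduce at hrep
    have hXval : ‖Complex.exp (r₂ * t)‖ = Real.exp (-(b/2)*t) := by
      rw [show r₂ * (t:ℂ) = ((-(b/2)*t : ℝ) : ℂ) + ((-(ν/2)*t : ℝ) : ℂ)*I by
        rw [hr2]; push_cast; ring, Complex.norm_exp]
      congr 1
      simp
    have habsden : ‖(ν:ℂ)*I‖ = ν := by
      rw [norm_mul, Complex.norm_real, Real.norm_eq_abs, Complex.norm_I, _root_.abs_of_pos hνpos, mul_one]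
    have habsz : ‖((ν:ℂ)*I)*(t:ℂ)‖ = ν*t := by
      rw [norm_mul, habsden, Complex.norm_real, Real.norm_eq_abs, _root_.abs_of_nonneg ht.le]
    have habsexp1 : ‖Complex.exp (((ν:ℂ)*I)*(t:ℂ))‖ = 1 := by
      rw [show ((ν:ℂ)*I)*(t:ℂ) = ((ν*t : ℝ):ℂ)*I by push_cast; ring, Complex.norm_exp]
      norm_num
    have hD0 : 0 ≤ ‖Complex.exp (((ν:ℂ)*I)*(t:ℂ)) - 1‖ := norm_nonneg _
    have hD2 : ‖Complex.exp (((ν:ℂ)*I)*(t:ℂ)) - 1‖ ≤ 2 := by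
      have h := norm_add_le (Complex.exp (((ν:ℂ)*I)*(t:ℂ))) (-1)
      rw [← sub_eq_add_neg] at h
      simp [habsexp1] at h
      linarith
    have hKval : ‖(Complex.exp (((ν:ℂ)*I)*(t:ℂ)) - 1)/((ν:ℂ)*I)‖
        = ‖Complex.exp (((ν:ℂ)*I)*(t:ℂ)) - 1‖/ν := by
      rw [norm_div, habsden]
    have hKν : ‖Complex.exp (((ν:ℂ)*I)*(t:ℂ)) - 1‖/ν ≤ 2/ν := by gcongr
    have hKt : ‖Complex.exp (((ν:ℂ)*I)*(t:ℂ)) - 1‖/ν ≤ 2*t := by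
      rcases le_or_gt (ν*t) 1 with h | h
      · have h5 := Complex.norm_exp_sub_one_le (x := ((ν:ℂ)*I)*(t:ℂ)) (by rw [habsz]; exact h)
        rw [habsz] at h5
        rw [div_le_iff₀ hνpos]
        nlinarith
      · have h2ν : 2/ν ≤ 2*t := by
          rw [div_le_iff₀ hνpos]; nlinarith
        linarith [hKν]
    have hK0 : 0 ≤ ‖Complex.exp (((ν:ℂ)*I)*(t:ℂ)) - 1‖/ν := by positivity
    have hRval : ‖r₂‖ ≤ (b+ν)/2 := by
      rw [hr2]
      calc ‖((-b/2 : ℝ) : ℂ) - ((ν/2 : ℝ) : ℂ)*I‖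
          ≤ ‖((-b/2 : ℝ) : ℂ)‖ + ‖((ν/2 : ℝ) : ℂ)*I‖ := by
            simpa [sub_eq_add_neg] using
              norm_add_le (((-b/2 : ℝ) : ℂ)) (-(((ν/2 : ℝ) : ℂ)*I))
        _ = (b+ν)/2 := by
            rw [norm_mul, Complex.norm_real, Real.norm_eq_abs, Complex.norm_real, Real.norm_eq_abs, Complex.norm_I,
              _root_.abs_of_nonpos (by nlinarith), _root_.abs_of_nonneg (by positivity)]
            ring
    have hLν : Real.sqrt Λ ≤ (b+ν)/2 := by
      have hΛle : Λ ≤ ((b+ν)/2)^2 := by nlinarith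
      calc Real.sqrt Λ ≤ Real.sqrt (((b+ν)/2)^2) := Real.sqrt_le_sqrt hΛle
        _ = (b+ν)/2 := Real.sqrt_sq (by positivity)
    refine combine hΛ hEpos hM0 hrep ?_ ?_ ?_
    · rw [hXval, hEdef]
      exact Real.exp_le_exp.mpr (by nlinarith)
    · rw [hXval, hKval, hMdef, hEdef]
      exact caseC_scalar hb hspos hsb hνpos ht.le hK0 hKt hKν hLnn hLν
    · rw [hXval, hKval, hMdef, hEdef]
      exact caseC_scalar hb hspos hsb hνpos ht.le hK0 hKt hKν (norm_nonneg _) hRval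
end
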